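/- arXiv:2203.09971 — 7 statements merged into one kernel-verified Lean document; each statement's English description precedes it below -/
import Mathlib

section
/- Every moving phantom mechanism is a truthful budget aggregation mechanism: for every moving phantom mechanism f over m ≥ 2 projects and n ≥ 1 voters, every preference profile V, every voter i, and all divisions v*_i (the voter's true peak) and v_i, the ℓ1 distance from v*_i to f(V_{-i}, v*_i) is at most the ℓ1 distance from v*_i to f(V_{-i}, v_i). -/
open Finset

/-- A division among `m` projects: coordinates in `[0,1]` summing to `1`. -/
def IsDivision {m : ℕ} (x : Fin m → ℝ) : Prop :=
  (∀ j, 0 ≤ x j ∧ x j ≤ 1) ∧ ∑ j, x j = 1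

/-- The ℓ1 distance between two vectors over `Fin m`. -/
noncomputable def l1 {m : ℕ} (x y : Fin m → ℝ) : ℝ := ∑ j, |x j - y j|

/-- The proportional division (coordinatewise mean) of a profile. -/
noncomputable def propDiv {n m : ℕ} (V : Fin n → Fin m → ℝ) : Fin m → ℝ :=
  fun j => (∑ i, V i j) / (n : ℝ)

/-- The `(k+1)`-th smallest element of a multiset of reals. -/
noncomputable def medianAt (s : Multiset ℝ) (k : ℕ) : ℝ :=
  (s.sort (· ≤ ·)).getD k 0

/-- Voter reports on project `j` together with the `n+1` phantom values `p 0, …, p n`. -/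
noncomputable def projValues {n m : ℕ} (V : Fin n → Fin m → ℝ)
    (p : ℕ → ℝ) (j : Fin m) : Multiset ℝ :=
  (Multiset.map (fun i => V i j) Finset.univ.val) +
    (Multiset.map p (Finset.range (n + 1)).val)

/-- The median (the `(n+1)`-th smallest of the `2n+1` values) of the `n` voter reports
on project `j` together with the `n+1` phantom values. -/
noncomputable def phantomMedian {n m : ℕ} (V : Fin n → Fin m → ℝ)
    (p : ℕ → ℝ) (j : Fin m) : ℝ :=
  medianAt (projValues V p j) n

/-- A phantom system for `n` voters: continuous, weakly increasing functions
`y k : [0,1] → [0,1]`, `k = 0, …, n`, with `y k 0 = 0`, `y k 1 = 1`,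
pointwise ordered in `k`. -/
structure PhantomSystem (n : ℕ) where
  y : ℕ → ℝ → ℝ
  contOn : ∀ k ≤ n, ContinuousOn (y k) (Set.Icc 0 1)
  monoOn : ∀ k ≤ n, MonotoneOn (y k) (Set.Icc 0 1)
  mem_Icc : ∀ k ≤ n, ∀ t ∈ Set.Icc (0:ℝ) 1, y k t ∈ Set.Icc (0:ℝ) 1
  map_zero : ∀ k ≤ n, y k 0 = 0
  map_one : ∀ k ≤ n, y k 1 = 1
  mono_idx : ∀ t ∈ Set.Icc (0:ℝ) 1, ∀ k k', k ≤ k' → k' ≤ n → y k t ≤ y k' t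

/-- `f` is the moving phantom mechanism associated with the phantom system `Y`:
on each profile of divisions, for some `t*` making the medians sum to `1`,
it outputs on each project the median of the voter reports and the phantom values. -/
def IsMovingPhantom {n m : ℕ} (f : (Fin n → Fin m → ℝ) → (Fin m → ℝ))
    (Y : PhantomSystem n) : Prop :=
  ∀ V : Fin n → Fin m → ℝ, (∀ i, IsDivision (V i)) →
    ∃ t ∈ Set.Icc (0:ℝ) 1,
      (∑ j, phantomMedian V (fun k => Y.y k t) j) = 1 ∧
      ∀ j, f V j = phantomMedian V (fun k => Y.y k t) j

/-- Truthfulness of a budget aggregation mechanism: no voter `i` with true peak `V i`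
can get an outcome closer (in ℓ1 distance) to her peak by reporting some division `v`
instead of `V i`. -/
def Truthful {n m : ℕ} (f : (Fin n → Fin m → ℝ) → (Fin m → ℝ)) : Prop :=
  ∀ V : Fin n → Fin m → ℝ, (∀ i, IsDivision (V i)) →
    ∀ i : Fin n, ∀ v : Fin m → ℝ, IsDivision v →
      l1 (f V) (V i) ≤ l1 (f (Function.update V i v)) (V i)

/-- The ℓ1-loss of mechanism `f` on profile `V`. -/
noncomputable def loss {n m : ℕ} (f : (Fin n → Fin m → ℝ) → (Fin m → ℝ))
    (V : Fin n → Fin m → ℝ) : ℝ :=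
  l1 (f V) (propDiv V)

/-- The phantom system of the Piecewise Uniform mechanism for `n` voters. -/
noncomputable def puPhantom (n : ℕ) (k : ℕ) (t : ℝ) : ℝ :=
  if t < 1 / 2 then
    (if (k : ℝ) / (n : ℝ) < 1 / 2 then 0 else 4 * t * (k : ℝ) / (n : ℝ) - 2 * t)
  else
    (if (k : ℝ) / (n : ℝ) < 1 / 2 then (k : ℝ) * (2 * t - 1) / (n : ℝ)
     else (k : ℝ) * (3 - 2 * t) / (n : ℝ) - 2 + 2 * t)

/-- `w` is an output of the Piecewise Uniform mechanism on profile `V`. -/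
def IsPUOutcome {n m : ℕ} (V : Fin n → Fin m → ℝ) (w : Fin m → ℝ) : Prop :=
  ∃ t ∈ Set.Icc (0:ℝ) 1,
    (∑ j, phantomMedian V (fun k => puPhantom n k t) j) = 1 ∧
    ∀ j, w j = phantomMedian V (fun k => puPhantom n k t) j

/-- `w` is an output of the Independent Markets mechanism (phantoms `min (k·t) 1`)
on profile `V`. -/
def IsIMOutcome {n m : ℕ} (V : Fin n → Fin m → ℝ) (w : Fin m → ℝ) : Prop :=
  ∃ t : ℝ, 0 ≤ t ∧
    (∑ j, phantomMedian V (fun k => min ((k : ℝ) * t) 1) j) = 1 ∧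
    ∀ j, w j = phantomMedian V (fun k => min ((k : ℝ) * t) 1) j

/-- A single-minded division: it assigns the whole budget to one project. -/
def SingleMindedDiv {m : ℕ} (v : Fin m → ℝ) : Prop := ∃ j, v j = 1

/-- A double-minded division relative to an outcome `w` (three projects): it agrees with
`w` on one project `j`, proposes `1 - w j` on another project, and `0` on the third. -/
def DoubleMindedDiv (w v : Fin 3 → ℝ) : Prop :=
  ∃ j j' : Fin 3, j ≠ j' ∧ v j = w j ∧ v j' = 1 - w j ∧
    ∀ k, k ≠ j → k ≠ j' → v k = 0

/-- A three-type profile for mechanism `f`: each voter is fully-satisfied,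
double-minded, or single-minded. -/
def ThreeTypeProfile {n : ℕ} (f : (Fin n → Fin 3 → ℝ) → (Fin 3 → ℝ))
    (V : Fin n → Fin 3 → ℝ) : Prop :=
  ∀ i, V i = f V ∨ DoubleMindedDiv (f V) (V i) ∨ SingleMindedDiv (V i)

/-- The single-minded division fully supporting project `j`. -/
noncomputable def singleDiv (j : Fin 3) : Fin 3 → ℝ :=
  fun j' => if j' = j then 1 else 0

/-- The double-minded division proposing `x k` on project `k`, `1 - x k` on
project `j` and `0` on the remaining project. -/
noncomputable def doubleDiv (x : Fin 3 → ℝ) (k j : Fin 3) : Fin 3 → ℝ :=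
  fun j' => if j' = k then x k else if j' = j then 1 - x k else 0

/-- A utilitarian mechanism: it always returns a division minimizing the total
ℓ1 distance (social cost) to the voters' proposals. -/
def Utilitarian {n m : ℕ} (f : (Fin n → Fin m → ℝ) → (Fin m → ℝ)) : Prop :=
  ∀ V : Fin n → Fin m → ℝ, (∀ i, IsDivision (V i)) →
    IsDivision (f V) ∧
    ∀ x : Fin m → ℝ, IsDivision x → (∑ i, l1 (V i) (f V)) ≤ ∑ i, l1 (V i) x


namespace MPAux

lemma countP_le_countP_of_imp {α : Type*} {p q : α → Prop}
    [DecidablePred p] [DecidablePred q] {s : Multiset α}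
    (h : ∀ a ∈ s, p a → q a) : s.countP p ≤ s.countP q := by
  induction s using Multiset.induction_on with
  | empty => simp
  | cons a t ih =>
    have ht := ih (fun b hb => h b (Multiset.mem_cons_of_mem hb))
    have ha := h a (Multiset.mem_cons_self a t)
    rw [Multiset.countP_cons, Multiset.countP_cons]
    by_cases hp : p a
    · simp only [hp, ha hp, if_true]; omega
    · simp only [hp, if_false]; split <;> omega

lemma sorted_le_of_mem_take {l : List ℝ} (hs : l.Pairwise (· ≤ ·)) {k : ℕ} {x : ℝ}
    (hx : x ∈ l.take (k + 1)) (hk : k < l.length) : x ≤ l[k] := by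
  obtain ⟨j, hj, rfl⟩ := List.getElem_of_mem hx
  have hj' : j < l.length := by
    have := hj; rw [List.length_take] at this; omega
  rw [List.getElem_take]
  have hjk : j ≤ k := by
    have := hj; rw [List.length_take] at this; omega
  exact hs.rel_get_of_le (a := ⟨j, hj'⟩) (b := ⟨k, hk⟩) hjk

lemma sorted_ge_of_mem_drop {l : List ℝ} (hs : l.Pairwise (· ≤ ·)) {k : ℕ} {x : ℝ}
    (hx : x ∈ l.drop k) (hk : k < l.length) : l[k] ≤ x := by
  obtain ⟨j, hj, rfl⟩ := List.getElem_of_mem hx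
  have hj2 : k + j < l.length := by
    have := hj; rw [List.length_drop] at this; omega
  rw [List.getElem_drop]
  exact hs.rel_get_of_le (a := ⟨k, hk⟩) (b := ⟨k + j, hj2⟩) (Nat.le_add_right _ _)

/-- At least `n+1` of the `2n+1` values are `≥` the median. -/
lemma countP_ge_median (s : Multiset ℝ) (n : ℕ) (h : Multiset.card s = 2 * n + 1) :
    n + 1 ≤ s.countP (fun z => medianAt s n ≤ z) := by
  classical
  set l := s.sort (· ≤ ·) with hl
  have hls : (↑l : Multiset ℝ) = s := Multiset.sort_eq _ _
  have hlen : l.length = 2 * n + 1 := by rw [hl, Multiset.length_sort]; exact h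
  have hsort : l.Pairwise (· ≤ ·) := Multiset.pairwise_sort _ _
  have hn : n < l.length := by omega
  have hmed : medianAt s n = l[n] := by
    rw [medianAt, ← hl, List.getD_eq_getElem _ _ hn]
  have hcnt : s.countP (fun z => medianAt s n ≤ z) =
      l.countP (fun z => decide (medianAt s n ≤ z)) := by
    rw [← hls, Multiset.coe_countP]
  rw [hcnt]
  have hsplit := List.take_append_drop n l
  have : l.countP (fun z => decide (medianAt s n ≤ z)) =
      (l.take n).countP (fun z => decide (medianAt s n ≤ z)) +
      (l.drop n).countP (fun z => decide (medianAt s n ≤ z)) := by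
    conv_lhs => rw [← hsplit]
    rw [List.countP_append]
  rw [this]
  have hdrop : (l.drop n).countP (fun z => decide (medianAt s n ≤ z)) = (l.drop n).length := by
    rw [List.countP_eq_length]
    intro a ha
    simpa [hmed] using sorted_ge_of_mem_drop hsort ha hn
  rw [hdrop, List.length_drop, hlen]
  omega

/-- At least `n+1` of the `2n+1` values are `≤` the median. -/
lemma countP_le_median (s : Multiset ℝ) (n : ℕ) (h : Multiset.card s = 2 * n + 1) :
    n + 1 ≤ s.countP (fun z => z ≤ medianAt s n) := by
  classical
  set l := s.sort (· ≤ ·) with hl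
  have hls : (↑l : Multiset ℝ) = s := Multiset.sort_eq _ _
  have hlen : l.length = 2 * n + 1 := by rw [hl, Multiset.length_sort]; exact h
  have hsort : l.Pairwise (· ≤ ·) := Multiset.pairwise_sort _ _
  have hn : n < l.length := by omega
  have hmed : medianAt s n = l[n] := by
    rw [medianAt, ← hl, List.getD_eq_getElem _ _ hn]
  have hcnt : s.countP (fun z => z ≤ medianAt s n) =
      l.countP (fun z => decide (z ≤ medianAt s n)) := by
    rw [← hls, Multiset.coe_countP]
  rw [hcnt]
  have hsplit := List.take_append_drop (n + 1) l
  have heq : l.countP (fun z => decide (z ≤ medianAt s n)) =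
      (l.take (n + 1)).countP (fun z => decide (z ≤ medianAt s n)) +
      (l.drop (n + 1)).countP (fun z => decide (z ≤ medianAt s n)) := by
    conv_lhs => rw [← hsplit]
    rw [List.countP_append]
  rw [heq]
  have htake : (l.take (n + 1)).countP (fun z => decide (z ≤ medianAt s n)) =
      (l.take (n + 1)).length := by
    rw [List.countP_eq_length]
    intro a ha
    simpa [hmed] using sorted_le_of_mem_take hsort ha hn
  rw [htake, List.length_take, hlen]
  have : min (n + 1) (2 * n + 1) = n + 1 := by omega
  omega

/-- If at least `n+1` of the `2n+1` values are `≥ c`, the median is `≥ c`. -/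
lemma le_medianAt_of_countP (s : Multiset ℝ) (n : ℕ) (h : Multiset.card s = 2 * n + 1)
    (c : ℝ) (hc : n + 1 ≤ s.countP (fun z => c ≤ z)) : c ≤ medianAt s n := by
  classical
  by_contra hlt
  push_neg at hlt
  set l := s.sort (· ≤ ·) with hl
  have hls : (↑l : Multiset ℝ) = s := Multiset.sort_eq _ _
  have hlen : l.length = 2 * n + 1 := by rw [hl, Multiset.length_sort]; exact h
  have hsort : l.Pairwise (· ≤ ·) := Multiset.pairwise_sort _ _
  have hn : n < l.length := by omega
  have hmed : medianAt s n = l[n] := by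
    rw [medianAt, ← hl, List.getD_eq_getElem _ _ hn]
  have hcnt : s.countP (fun z => c ≤ z) = l.countP (fun z => decide (c ≤ z)) := by
    rw [← hls, Multiset.coe_countP]
  rw [hcnt] at hc
  have hsplit := List.take_append_drop (n + 1) l
  have heq : l.countP (fun z => decide (c ≤ z)) =
      (l.take (n + 1)).countP (fun z => decide (c ≤ z)) +
      (l.drop (n + 1)).countP (fun z => decide (c ≤ z)) := by
    conv_lhs => rw [← hsplit]
    rw [List.countP_append]
  have htake : (l.take (n + 1)).countP (fun z => decide (c ≤ z)) = 0 := by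
    rw [List.countP_eq_zero]
    intro a ha
    have h1 : a ≤ l[n] := sorted_le_of_mem_take hsort ha hn
    have h2 : l[n] < c := hmed ▸ hlt
    simp only [decide_eq_true_eq]
    intro hca
    exact absurd (hca.trans h1) (not_le.2 h2)
  have hdl : (l.drop (n + 1)).countP (fun z => decide (c ≤ z)) ≤ n := by
    calc (l.drop (n + 1)).countP (fun z => decide (c ≤ z)) ≤ (l.drop (n + 1)).length :=
          List.countP_le_length
      _ = n := by rw [List.length_drop, hlen]; omega
  omega

/-- If at least `n+1` of the `2n+1` values are `≤ c`, the median is `≤ c`. -/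
lemma medianAt_le_of_countP (s : Multiset ℝ) (n : ℕ) (h : Multiset.card s = 2 * n + 1)
    (c : ℝ) (hc : n + 1 ≤ s.countP (fun z => z ≤ c)) : medianAt s n ≤ c := by
  classical
  by_contra hlt
  push_neg at hlt
  set l := s.sort (· ≤ ·) with hl
  have hls : (↑l : Multiset ℝ) = s := Multiset.sort_eq _ _
  have hlen : l.length = 2 * n + 1 := by rw [hl, Multiset.length_sort]; exact h
  have hsort : l.Pairwise (· ≤ ·) := Multiset.pairwise_sort _ _
  have hn : n < l.length := by omega
  have hmed : medianAt s n = l[n] := by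
    rw [medianAt, ← hl, List.getD_eq_getElem _ _ hn]
  have hcnt : s.countP (fun z => z ≤ c) = l.countP (fun z => decide (z ≤ c)) := by
    rw [← hls, Multiset.coe_countP]
  rw [hcnt] at hc
  have hsplit := List.take_append_drop n l
  have heq : l.countP (fun z => decide (z ≤ c)) =
      (l.take n).countP (fun z => decide (z ≤ c)) +
      (l.drop n).countP (fun z => decide (z ≤ c)) := by
    conv_lhs => rw [← hsplit]
    rw [List.countP_append]
  have hdrop : (l.drop n).countP (fun z => decide (z ≤ c)) = 0 := by
    rw [List.countP_eq_zero]
    intro a ha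
    have h1 : l[n] ≤ a := sorted_ge_of_mem_drop hsort ha hn
    have h2 : c < l[n] := hmed ▸ hlt
    simp only [decide_eq_true_eq]
    intro hca
    exact absurd (h1.trans hca) (not_le.2 h2)
  have htk : (l.take n).countP (fun z => decide (z ≤ c)) ≤ n := by
    calc (l.take n).countP (fun z => decide (z ≤ c)) ≤ (l.take n).length :=
          List.countP_le_length
      _ ≤ n := by rw [List.length_take]; omega
  omega

/-- If the median strictly exceeds the distinguished value `x`, then changing `x`
arbitrarily and weakly increasing the rest cannot decrease the median. -/
lemma median_mono_up {n : ℕ} {x x' : ℝ} {r r' : Multiset ℝ}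
    (hr : Multiset.card r = 2 * n) (hr' : Multiset.card r' = 2 * n)
    (hcount : ∀ c : ℝ, r.countP (fun z => c ≤ z) ≤ r'.countP (fun z => c ≤ z))
    (hlt : x < medianAt (x ::ₘ r) n) :
    medianAt (x ::ₘ r) n ≤ medianAt (x' ::ₘ r') n := by
  classical
  set μ := medianAt (x ::ₘ r) n with hμ
  have hcard : Multiset.card (x ::ₘ r) = 2 * n + 1 := by
    rw [Multiset.card_cons, hr]
  have h1 : n + 1 ≤ (x ::ₘ r).countP (fun z => μ ≤ z) := countP_ge_median _ n hcard
  have h2 : n + 1 ≤ r.countP (fun z => μ ≤ z) := by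
    rwa [Multiset.countP_cons_of_neg (p := fun z => μ ≤ z) _ (not_le.2 hlt)] at h1
  have h3 : n + 1 ≤ (x' ::ₘ r').countP (fun z => μ ≤ z) := by
    have := (h2.trans (hcount μ))
    rw [Multiset.countP_cons]
    omega
  exact le_medianAt_of_countP _ n (by rw [Multiset.card_cons, hr']) μ h3

/-- Dual version: if the median is strictly below `x`, then changing `x` arbitrarily
and weakly decreasing the rest cannot increase the median. -/
lemma median_mono_down {n : ℕ} {x x' : ℝ} {r r' : Multiset ℝ}
    (hr : Multiset.card r = 2 * n) (hr' : Multiset.card r' = 2 * n)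
    (hcount : ∀ c : ℝ, r.countP (fun z => z ≤ c) ≤ r'.countP (fun z => z ≤ c))
    (hlt : medianAt (x ::ₘ r) n < x) :
    medianAt (x' ::ₘ r') n ≤ medianAt (x ::ₘ r) n := by
  classical
  set μ := medianAt (x ::ₘ r) n with hμ
  have hcard : Multiset.card (x ::ₘ r) = 2 * n + 1 := by
    rw [Multiset.card_cons, hr]
  have h1 : n + 1 ≤ (x ::ₘ r).countP (fun z => z ≤ μ) := countP_le_median _ n hcard
  have h2 : n + 1 ≤ r.countP (fun z => z ≤ μ) := by
    rwa [Multiset.countP_cons_of_neg (p := fun z => z ≤ μ) _ (not_le.2 hlt)] at h1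
  have h3 : n + 1 ≤ (x' ::ₘ r').countP (fun z => z ≤ μ) := by
    have := (h2.trans (hcount μ))
    rw [Multiset.countP_cons]
    omega
  exact medianAt_le_of_countP _ n (by rw [Multiset.card_cons, hr']) μ h3

/-- Decomposition of `projValues` at an updated profile. -/
lemma projValues_update {n m : ℕ} (V : Fin n → Fin m → ℝ) (i : Fin n) (w : Fin m → ℝ)
    (p : ℕ → ℝ) (j : Fin m) :
    projValues (Function.update V i w) p j =
      w j ::ₘ (Multiset.map (fun i' => V i' j) (Finset.univ.val.erase i) +
        Multiset.map p (Finset.range (n + 1)).val) := by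
  classical
  rw [projValues]
  have huniv : (Finset.univ.val : Multiset (Fin n)) = i ::ₘ Finset.univ.val.erase i :=
    (Multiset.cons_erase (Finset.mem_univ i)).symm
  have h1 : Multiset.map (fun i' => Function.update V i w i' j) Finset.univ.val
      = w j ::ₘ Multiset.map (fun i' => V i' j) (Finset.univ.val.erase i) := by
    conv_lhs => rw [huniv]
    rw [Multiset.map_cons, Function.update_self]
    congr 1
    apply Multiset.map_congr rfl
    intro i' hi'
    have hne : i' ≠ i :=
      ((Multiset.Nodup.mem_erase_iff (Finset.univ.nodup)).1 hi').1
    rw [Function.update_of_ne hne]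
  rw [h1, Multiset.cons_add]

/-- The key ℓ1 summation lemma. -/
lemma l1_sum_key {m : ℕ} (p a b : Fin m → ℝ)
    (hpa : ∑ j, a j = ∑ j, p j) (hpb : ∑ j, b j = ∑ j, p j)
    (hkey : ∀ j, p j < a j → a j ≤ b j) :
    ∑ j, |a j - p j| ≤ ∑ j, |b j - p j| := by
  classical
  set S := Finset.univ.filter (fun j => p j < a j) with hS
  have hsum0a : ∑ j ∈ S, (a j - p j) + ∑ j ∈ Sᶜ, (a j - p j) = 0 := by
    rw [Finset.sum_add_sum_compl]
    rw [Finset.sum_sub_distrib, hpa, sub_self]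
  have hsum0b : ∑ j ∈ S, (b j - p j) + ∑ j ∈ Sᶜ, (b j - p j) = 0 := by
    rw [Finset.sum_add_sum_compl]
    rw [Finset.sum_sub_distrib, hpb, sub_self]
  have ha_eq : ∑ j, |a j - p j| = 2 * ∑ j ∈ S, (a j - p j) := by
    rw [← Finset.sum_add_sum_compl S (fun j => |a j - p j|)]
    have h1 : ∑ j ∈ S, |a j - p j| = ∑ j ∈ S, (a j - p j) := by
      apply Finset.sum_congr rfl
      intro j hj
      have : p j < a j := (Finset.mem_filter.1 hj).2
      exact abs_of_pos (by linarith)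
    have h2 : ∑ j ∈ Sᶜ, |a j - p j| = ∑ j ∈ Sᶜ, -(a j - p j) := by
      apply Finset.sum_congr rfl
      intro j hj
      have hj' : ¬ p j < a j := by
        have := Finset.mem_compl.1 hj
        simpa [hS] using this
      exact abs_of_nonpos (by push_neg at hj'; linarith)
    rw [h1, h2, Finset.sum_neg_distrib]
    linarith
  have hb_ge : 2 * ∑ j ∈ S, (b j - p j) ≤ ∑ j, |b j - p j| := by
    rw [← Finset.sum_add_sum_compl S (fun j => |b j - p j|)]
    have h1 : ∑ j ∈ S, (b j - p j) ≤ ∑ j ∈ S, |b j - p j| :=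
      Finset.sum_le_sum fun j _ => le_abs_self _
    have h2 : ∑ j ∈ Sᶜ, -(b j - p j) ≤ ∑ j ∈ Sᶜ, |b j - p j| :=
      Finset.sum_le_sum fun j _ => neg_le_abs _
    have h3 : ∑ j ∈ Sᶜ, -(b j - p j) = ∑ j ∈ S, (b j - p j) := by
      rw [Finset.sum_neg_distrib]
      linarith
    linarith
  have hab : ∑ j ∈ S, (a j - p j) ≤ ∑ j ∈ S, (b j - p j) := by
    apply Finset.sum_le_sum
    intro j hj
    have h := hkey j (Finset.mem_filter.1 hj).2
    linarith
  linarith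

end MPAux

/-- Every moving phantom mechanism is truthful: for every moving phantom
mechanism `f` over `m ≥ 2` projects and `n ≥ 1` voters, every preference profile,
every voter `i`, and all divisions `vstar` (the true peak) and `v`, the ℓ1 distance
from `vstar` to the output under truthful reporting is at most the ℓ1 distance from
`vstar` to the output under misreporting `v`. -/
theorem moving_phantom_truthful {n m : ℕ} (hn : 1 ≤ n) (hm : 2 ≤ m)
    (f : (Fin n → Fin m → ℝ) → (Fin m → ℝ)) (Y : PhantomSystem n)
    (hf : IsMovingPhantom f Y)
    (V : Fin n → Fin m → ℝ) (hV : ∀ i, IsDivision (V i))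
    (i : Fin n) (vstar v : Fin m → ℝ)
    (hvstar : IsDivision vstar) (hv : IsDivision v) :
    l1 (f (Function.update V i vstar)) vstar ≤ l1 (f (Function.update V i v)) vstar := by
  classical
  open MPAux in
  have hAdiv : ∀ i', IsDivision (Function.update V i vstar i') := by
    intro i'
    rcases eq_or_ne i' i with rfl | hne
    · simpa using hvstar
    · simpa [Function.update_of_ne hne] using hV i'
  have hBdiv : ∀ i', IsDivision (Function.update V i v i') := by
    intro i'
    rcases eq_or_ne i' i with rfl | hne
    · simpa using hv
    · simpa [Function.update_of_ne hne] using hV i'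
  obtain ⟨tA, htA, hsumA, houtA⟩ := hf (Function.update V i vstar) hAdiv
  obtain ⟨tB, htB, hsumB, houtB⟩ := hf (Function.update V i v) hBdiv
  set pA : ℕ → ℝ := fun k => Y.y k tA with hpA
  set pB : ℕ → ℝ := fun k => Y.y k tB with hpB
  -- the "rest" multisets (other voters + phantoms)
  set rest : (ℕ → ℝ) → Fin m → Multiset ℝ := fun p j =>
    Multiset.map (fun i' => V i' j) (Finset.univ.val.erase i) +
      Multiset.map p (Finset.range (n + 1)).val with hrest
  have hcard_univ : Multiset.card (Finset.univ.val : Multiset (Fin n)) = n := by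
    rw [← Finset.card_def]
    simp
  have hcard_erase : Multiset.card (Finset.univ.val.erase i) = n - 1 := by
    rw [Multiset.card_erase_of_mem (Finset.mem_univ i), hcard_univ]
    rfl
  have hcard_rest : ∀ (p : ℕ → ℝ) (j : Fin m), Multiset.card (rest p j) = 2 * n := by
    intro p j
    rw [hrest]
    simp only [Multiset.card_add, Multiset.card_map]
    rw [hcard_erase, ← Finset.card_def, Finset.card_range]
    omega
  have hdecA : ∀ j, projValues (Function.update V i vstar) pA j = vstar j ::ₘ rest pA j := by
    intro j; rw [hrest]; exact projValues_update V i vstar pA j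
  have hdecB : ∀ j, projValues (Function.update V i v) pB j = v j ::ₘ rest pB j := by
    intro j; rw [hrest]; exact projValues_update V i v pB j
  -- sums of outputs
  have hsum_fA : ∑ j, f (Function.update V i vstar) j = ∑ j, vstar j := by
    rw [hvstar.2]
    calc ∑ j, f (Function.update V i vstar) j
        = ∑ j, phantomMedian (Function.update V i vstar) pA j :=
          Finset.sum_congr rfl fun j _ => houtA j
      _ = 1 := hsumA
  have hsum_fB : ∑ j, f (Function.update V i v) j = ∑ j, vstar j := by
    rw [hvstar.2]
    calc ∑ j, f (Function.update V i v) j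
        = ∑ j, phantomMedian (Function.update V i v) pB j :=
          Finset.sum_congr rfl fun j _ => houtB j
      _ = 1 := hsumB
  rcases le_total tA tB with hT | hT
  · -- phantoms move up: use `median_mono_up`
    have hphant : ∀ k ∈ Finset.range (n + 1), pA k ≤ pB k := by
      intro k hk
      have hkn : k ≤ n := by
        have := Finset.mem_range.1 hk; omega
      exact Y.monoOn k hkn htA htB hT
    have hcount : ∀ (j : Fin m) (c : ℝ),
        (rest pA j).countP (fun z => c ≤ z) ≤ (rest pB j).countP (fun z => c ≤ z) := by
      intro j c
      rw [hrest]
      simp only [Multiset.countP_add]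
      have h2 : (Multiset.map pA (Finset.range (n + 1)).val).countP (fun z => c ≤ z) ≤
          (Multiset.map pB (Finset.range (n + 1)).val).countP (fun z => c ≤ z) := by
        rw [Multiset.countP_map, Multiset.countP_map,
          ← Multiset.countP_eq_card_filter, ← Multiset.countP_eq_card_filter]
        apply countP_le_countP_of_imp
        intro k hk hck
        exact le_trans hck (hphant k hk)
      omega
    have hkey : ∀ j, vstar j < f (Function.update V i vstar) j →
        f (Function.update V i vstar) j ≤ f (Function.update V i v) j := by
      intro j hj
      rw [houtA j] at hj ⊢
      rw [houtB j]
      rw [phantomMedian, phantomMedian, hdecA j, hdecB j] at *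
      exact median_mono_up (hcard_rest pA j) (hcard_rest pB j) (hcount j) hj
    have := l1_sum_key vstar (f (Function.update V i vstar)) (f (Function.update V i v))
      hsum_fA hsum_fB hkey
    simpa [l1] using this
  · -- phantoms move down: use `median_mono_down`
    have hphant : ∀ k ∈ Finset.range (n + 1), pB k ≤ pA k := by
      intro k hk
      have hkn : k ≤ n := by
        have := Finset.mem_range.1 hk; omega
      exact Y.monoOn k hkn htB htA hT
    have hcount : ∀ (j : Fin m) (c : ℝ),
        (rest pA j).countP (fun z => z ≤ c) ≤ (rest pB j).countP (fun z => z ≤ c) := by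
      intro j c
      rw [hrest]
      simp only [Multiset.countP_add]
      have h2 : (Multiset.map pA (Finset.range (n + 1)).val).countP (fun z => z ≤ c) ≤
          (Multiset.map pB (Finset.range (n + 1)).val).countP (fun z => z ≤ c) := by
        rw [Multiset.countP_map, Multiset.countP_map,
          ← Multiset.countP_eq_card_filter, ← Multiset.countP_eq_card_filter]
        apply countP_le_countP_of_imp
        intro k hk hck
        exact le_trans (hphant k hk) hck
      omega
    have hkey : ∀ j, f (Function.update V i vstar) j < vstar j →
        f (Function.update V i v) j ≤ f (Function.update V i vstar) j := by
      intro j hj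
      rw [houtA j] at hj ⊢
      rw [houtB j]
      rw [phantomMedian, phantomMedian, hdecA j, hdecB j] at *
      exact median_mono_down (hcard_rest pA j) (hcard_rest pB j) (hcount j) hj
    have hneg := l1_sum_key (fun j => -vstar j) (fun j => -(f (Function.update V i vstar) j))
      (fun j => -(f (Function.update V i v) j))
      (by simp only [Finset.sum_neg_distrib]; rw [hsum_fA])
      (by simp only [Finset.sum_neg_distrib]; rw [hsum_fB])
      (by intro j hjj
          have h1 : f (Function.update V i vstar) j < vstar j := by linarith
          have h2 := hkey j h1
          linarith)
    simp only [neg_sub_neg] at hneg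
    rw [l1, l1]
    calc ∑ j, |f (Function.update V i vstar) j - vstar j|
        = ∑ j, |vstar j - f (Function.update V i vstar) j| := by
          apply Finset.sum_congr rfl; intro j _; rw [abs_sub_comm]
      _ ≤ ∑ j, |vstar j - f (Function.update V i v) j| := hneg
      _ = ∑ j, |f (Function.update V i v) j - vstar j| := by
          apply Finset.sum_congr rfl; intro j _; rw [abs_sub_comm]
end

section
/- For m = 2 projects, the Uniform Phantom mechanism is 1/2-approximate: for every preference profile V of n voters over 2 projects, the ℓ1 distance between the output of the Uniform Phantom mechanism on V and the proportional division of V is at most 1/2. -/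
open Finset

open List in
theorem countP_le_med (L : List ℝ) (hL : L.Pairwise (· ≤ ·)) (i : ℕ) (h : i < L.length) :
    i + 1 ≤ L.countP (fun x => decide (x ≤ L[i])) := by
  have h1 : L.countP (fun x => decide (x ≤ L[i])) =
      (L.take (i+1)).countP (fun x => decide (x ≤ L[i])) +
      (L.drop (i+1)).countP (fun x => decide (x ≤ L[i])) := by
    rw [← List.countP_append, List.take_append_drop]
  have h2 : (L.take (i+1)).countP (fun x => decide (x ≤ L[i])) = (L.take (i+1)).length := by
    apply List.countP_eq_length.2
    intro x hx
    simp only [decide_eq_true_iff]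
    obtain ⟨k, hk, rfl⟩ := List.mem_iff_getElem.1 hx
    have hk2 : k ≤ i := by simp [List.length_take] at hk; omega
    have hk' : k < L.length := by omega
    have := hL.sortedLE.monotone_get (a := ⟨k, hk'⟩) (b := ⟨i, h⟩) (by simpa using hk2)
    simpa [List.getElem_take] using this
  have h3 : (L.take (i+1)).length = i + 1 := by simp [List.length_take]; omega
  omega

open List in
theorem countP_ge_med (L : List ℝ) (hL : L.Pairwise (· ≤ ·)) (i : ℕ) (h : i < L.length) :
    L.length - i ≤ L.countP (fun x => decide (L[i] ≤ x)) := by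
  have h1 : L.countP (fun x => decide (L[i] ≤ x)) =
      (L.take i).countP (fun x => decide (L[i] ≤ x)) +
      (L.drop i).countP (fun x => decide (L[i] ≤ x)) := by
    rw [← List.countP_append, List.take_append_drop]
  have h2 : (L.drop i).countP (fun x => decide (L[i] ≤ x)) = (L.drop i).length := by
    apply List.countP_eq_length.2
    intro x hx
    simp only [decide_eq_true_iff]
    obtain ⟨k, hk, rfl⟩ := List.mem_iff_getElem.1 hx
    have hk' : i + k < L.length := by simp [List.length_drop] at hk; omega
    have := hL.sortedLE.monotone_get (a := ⟨i, h⟩) (b := ⟨i + k, hk'⟩) (by simp)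
    simpa [List.getElem_drop] using this
  have h3 : (L.drop i).length = L.length - i := by simp
  omega


theorem median_mean_close {n m : ℕ} (hn : 1 ≤ n) (V : Fin n → Fin m → ℝ)
    (hV : ∀ i j, 0 ≤ V i j ∧ V i j ≤ 1) (j : Fin m) :
    |phantomMedian V (fun k => (k:ℝ)/(n:ℝ)) j - propDiv V j| ≤ 1/4 := by
  have hnR : (0:ℝ) < n := by exact_mod_cast hn
  set p : ℕ → ℝ := fun k => (k:ℝ)/(n:ℝ) with hp
  set s := projValues V p j with hs
  set L := s.sort (· ≤ ·) with hL
  have hsort : L.Pairwise (· ≤ ·) := Multiset.pairwise_sort _ _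
  have hcard : Multiset.card s = 2*n+1 := by
    simp [hs, projValues]; ring
  have hlen : L.length = 2*n+1 := by rw [hL, Multiset.length_sort, hcard]
  have hnlen : n < L.length := by omega
  set M := L[n] with hM
  have hmed : phantomMedian V p j = M := by
    rw [phantomMedian, medianAt, ← hs, ← hL, List.getD_eq_getElem _ _ hnlen]
  -- M ∈ [0,1]
  have hMmem : M ∈ s := by
    rw [← Multiset.mem_sort (· ≤ ·), ← hL]; exact List.getElem_mem hnlen
  have hM01 : 0 ≤ M ∧ M ≤ 1 := by
    rw [hs, projValues, Multiset.mem_add] at hMmem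
    rcases hMmem with h | h
    · obtain ⟨i, _, he⟩ := Multiset.mem_map.1 h
      rw [← he]; exact hV i j
    · obtain ⟨k, hk, he⟩ := Multiset.mem_map.1 h
      rw [← he]
      have hk' : k ≤ n := by
        have : k ∈ Finset.range (n+1) := hk
        rw [Finset.mem_range] at this; omega
      constructor
      · simp only [hp]; positivity
      · simp only [hp]; rw [div_le_one hnR]; exact_mod_cast hk'
  obtain ⟨hM0, hM1⟩ := hM01
  -- countP facts on the multiset
  have key1 : n + 1 ≤ Multiset.countP (fun x => x ≤ M) s := by
    have h1 := countP_le_med L hsort n hnlen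
    rw [← hM] at h1
    rw [← Multiset.sort_eq s (· ≤ ·), ← hL, Multiset.coe_countP]
    exact h1
  have key2 : n + 1 ≤ Multiset.countP (fun x => M ≤ x) s := by
    have h1 := countP_ge_med L hsort n hnlen
    rw [← hM] at h1
    rw [← Multiset.sort_eq s (· ≤ ·), ← hL, Multiset.coe_countP]
    omega
  -- split counts into voters + phantoms
  set B := (Finset.univ.filter (fun i : Fin n => V i j ≤ M)).card with hBdef
  set A := ((Finset.range (n+1)).filter (fun k => p k ≤ M)).card with hAdef
  set C := (Finset.univ.filter (fun i : Fin n => M ≤ V i j)).card with hCdef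
  set A' := ((Finset.range (n+1)).filter (fun k => M ≤ p k)).card with hA'def
  have split1 : Multiset.countP (fun x => x ≤ M) s = B + A := by
    rw [hs, projValues, Multiset.countP_add, Multiset.countP_map, Multiset.countP_map]
    rfl
  have split2 : Multiset.countP (fun x => M ≤ x) s = C + A' := by
    rw [hs, projValues, Multiset.countP_add, Multiset.countP_map, Multiset.countP_map]
    rfl
  have hBA : n + 1 ≤ B + A := by rw [← split1]; exact key1
  have hCA : n + 1 ≤ C + A' := by rw [← split2]; exact key2
  -- bound A
  have hA : (A : ℝ) ≤ (n:ℝ) * M + 1 := by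
    have hsub : (Finset.range (n+1)).filter (fun k => p k ≤ M) ⊆
        Finset.range (⌊(n:ℝ)*M⌋₊ + 1) := by
      intro k hk
      rw [Finset.mem_filter] at hk
      rw [Finset.mem_range, Nat.lt_succ_iff, Nat.le_floor_iff (by positivity)]
      have h2 := hk.2
      simp only [hp] at h2
      rw [div_le_iff₀ hnR] at h2
      linarith
    have h3 := Finset.card_le_card hsub
    rw [Finset.card_range] at h3
    have hfl : (⌊(n:ℝ)*M⌋₊ : ℝ) ≤ (n:ℝ)*M := Nat.floor_le (by positivity)
    calc (A:ℝ) ≤ ((⌊(n:ℝ)*M⌋₊ + 1 : ℕ) : ℝ) := by exact_mod_cast h3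
    _ ≤ (n:ℝ)*M + 1 := by push_cast; linarith
  have hBn : B ≤ n := by
    have := Finset.card_filter_le (Finset.univ : Finset (Fin n)) (fun i => V i j ≤ M)
    simpa using this
  have hB : (n:ℝ) * (1 - M) ≤ (B:ℝ) := by
    have : ((n:ℝ) + 1) ≤ (B:ℝ) + (A:ℝ) := by exact_mod_cast hBA
    nlinarith
  -- bound A'
  have hceil : ⌈(n:ℝ)*M⌉₊ ≤ n := Nat.ceil_le.2 (by nlinarith)
  have hA' : A' ≤ n + 1 - ⌈(n:ℝ)*M⌉₊ := by
    have hsub : (Finset.range (n+1)).filter (fun k => M ≤ p k) ⊆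
        Finset.Ico (⌈(n:ℝ)*M⌉₊) (n+1) := by
      intro k hk
      rw [Finset.mem_filter, Finset.mem_range] at hk
      rw [Finset.mem_Ico]
      refine ⟨Nat.ceil_le.2 ?_, hk.1⟩
      have h2 := hk.2
      simp only [hp] at h2
      rw [le_div_iff₀ hnR] at h2
      linarith
    have h3 := Finset.card_le_card hsub
    rwa [Nat.card_Ico] at h3
  have hC : (n:ℝ) * M ≤ (C:ℝ) := by
    have h4 : ⌈(n:ℝ)*M⌉₊ ≤ C := by omega
    calc (n:ℝ)*M ≤ (⌈(n:ℝ)*M⌉₊ : ℝ) := Nat.le_ceil _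
    _ ≤ (C:ℝ) := by exact_mod_cast h4
  -- sum bounds
  set S := ∑ i, V i j with hSdef
  have hsplit := Finset.sum_filter_add_sum_filter_not Finset.univ
    (fun i : Fin n => V i j ≤ M) (fun i => V i j)
  have h1 : ∑ i ∈ Finset.univ.filter (fun i : Fin n => V i j ≤ M), V i j ≤ (B:ℝ) * M := by
    have := Finset.sum_le_card_nsmul (Finset.univ.filter (fun i : Fin n => V i j ≤ M))
      (fun i => V i j) M (fun x hx => (Finset.mem_filter.1 hx).2)
    simpa [nsmul_eq_mul] using this
  have hcardc : (Finset.univ.filter (fun i : Fin n => ¬ (V i j ≤ M))).card = n - B := by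
    have := Finset.card_filter_add_card_filter_not
      (s := (Finset.univ : Finset (Fin n))) (p := fun i => V i j ≤ M)
    simp only [Finset.card_univ, Fintype.card_fin] at this
    omega
  have h2 : ∑ i ∈ Finset.univ.filter (fun i : Fin n => ¬ (V i j ≤ M)), V i j
      ≤ (n:ℝ) - (B:ℝ) := by
    have := Finset.sum_le_card_nsmul (Finset.univ.filter (fun i : Fin n => ¬ (V i j ≤ M)))
      (fun i => V i j) 1 (fun x _ => (hV x j).2)
    rw [hcardc] at this
    have hc : (((n - B : ℕ)) : ℝ) = (n:ℝ) - (B:ℝ) := by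
      rw [Nat.cast_sub hBn]
    simpa [nsmul_eq_mul, hc] using this
  have hSle : S ≤ (n:ℝ) - ((n:ℝ)*(1-M))*(1-M) := by
    have hS : S = _ + _ := hsplit.symm
    rw [hS]
    have hMle : 1 - M ≥ 0 := by linarith
    nlinarith [h1, h2, hB]
  have h3 : (C:ℝ) * M ≤ ∑ i ∈ Finset.univ.filter (fun i : Fin n => M ≤ V i j), V i j := by
    have := Finset.card_nsmul_le_sum (Finset.univ.filter (fun i : Fin n => M ≤ V i j))
      (fun i => V i j) M (fun x hx => (Finset.mem_filter.1 hx).2)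
    simpa [nsmul_eq_mul] using this
  have h4 : ∑ i ∈ Finset.univ.filter (fun i : Fin n => M ≤ V i j), V i j ≤ S := by
    apply Finset.sum_le_sum_of_subset_of_nonneg (Finset.filter_subset _ _)
    intro i _ _
    exact (hV i j).1
  have hSge : (n:ℝ) * M * M ≤ S :=
    le_trans (le_trans (mul_le_mul_of_nonneg_right hC hM0) h3) h4
  -- finish
  rw [hmed]
  have hprop : propDiv V j = S / n := rfl
  rw [hprop]
  have he1 : ((n:ℝ) - ((n:ℝ)*(1-M))*(1-M)) = (2*M - M^2) * n := by ring
  have hmu1 : S / n ≤ 2*M - M^2 := by rw [div_le_iff₀ hnR]; linarith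
  have hmu2 : M^2 ≤ S / n := by
    rw [le_div_iff₀ hnR]
    have he2 : M^2 * n = (n:ℝ) * M * M := by ring
    linarith
  have hsq : (M - 1/2)^2 = M^2 - M + 1/4 := by ring
  have hsq' : (0:ℝ) ≤ (M - 1/2)^2 := sq_nonneg _
  rw [abs_le]
  constructor
  · linarith
  · linarith


/-- For `m = 2` projects, the Uniform Phantom mechanism (phantoms
`k/n`, `k = 0, …, n`) is `1/2`-approximate: on every profile, the ℓ1 distance
between its output and the proportional division is at most `1/2`. -/
theorem uniform_phantom_half_approximate {n : ℕ} (hn : 1 ≤ n)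
    (V : Fin n → Fin 2 → ℝ) (hV : ∀ i, IsDivision (V i)) :
    l1 (fun j => phantomMedian V (fun k => (k : ℝ) / (n : ℝ)) j) (propDiv V) ≤ 1 / 2 := by
  have hV' : ∀ i j, 0 ≤ V i j ∧ V i j ≤ 1 := fun i j => (hV i).1 j
  have h0 := median_mean_close hn V hV' 0
  have h1 := median_mean_close hn V hV' 1
  rw [l1, Fin.sum_univ_two]
  linarith
end

section
/- Let n ≥ 1 and let x_1,…,x_n ∈ [0,1]. Let x be the median of the 2n+1 values x_1,…,x_n, 0, 1/n, 2/n, …, 1 (i.e., the n voter values together with the n+1 uniformly spaced phantom values k/n for k = 0,…,n). Then |x − (1/n) Σ_{i=1}^n x_i| ≤ 1/4. -/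
open Finset

set_option maxHeartbeats 1000000

/-- Let `n ≥ 1` and `x 1, …, x n ∈ [0,1]`. The median of the `2n+1`
values `x 1, …, x n, 0, 1/n, …, 1` ((n+1)-th smallest) is within `1/4` of the mean
of the `x i`. -/
theorem uniform_median_close_to_mean {n : ℕ} (hn : 1 ≤ n)
    (x : Fin n → ℝ) (hx : ∀ i, x i ∈ Set.Icc (0:ℝ) 1) :
    |medianAt ((Multiset.map x Finset.univ.val) +
        (Multiset.map (fun k => (k : ℝ) / (n : ℝ)) (Finset.range (n + 1)).val)) n
      - (∑ i, x i) / (n : ℝ)| ≤ 1 / 4 := by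
  have hn0 : (0:ℝ) < n := by exact_mod_cast hn
  have hph : (Multiset.map (fun k => (k : ℝ) / (n : ℝ)) (Finset.range (n + 1)).val)
      = Multiset.map (fun k : ℕ => (k : ℝ) / (n : ℝ)) (Finset.range (n + 1)).val := by
    simp
  rw [hph]
  set s : Multiset ℝ := (Multiset.map x Finset.univ.val) +
      (Multiset.map (fun k : ℕ => (k : ℝ) / (n : ℝ)) (Finset.range (n + 1)).val) with hs
  set l : List ℝ := s.sort (· ≤ ·) with hl
  have hlen : l.length = 2*n+1 := by
    rw [hl, Multiset.length_sort, hs]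
    simp
    omega
  have hnl : n < l.length := by omega
  have hsort : l.Pairwise (· ≤ ·) := Multiset.pairwise_sort s _
  set m : ℝ := medianAt s n with hm
  have hm' : m = l[n] := List.getD_eq_getElem l 0 hnl
  have hdrop : l.drop n = m :: l.drop (n+1) := by
    rw [hm']; exact List.drop_eq_getElem_cons hnl
  -- counting lower bounds on sorted list
  have hcle : n+1 ≤ l.countP (fun v => decide (v ≤ m)) := by
    have hsplit : l.countP (fun v => decide (v ≤ m))
        = (l.take n).countP (fun v => decide (v ≤ m))
          + (l.drop n).countP (fun v => decide (v ≤ m)) := by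
      conv_lhs => rw [← List.take_append_drop n l]
      exact List.countP_append
    have h1 : (l.take n).countP (fun v => decide (v ≤ m)) = (l.take n).length := by
      apply List.countP_eq_length.2
      intro a ha
      simp only [decide_eq_true_eq]
      exact hsort.rel_of_mem_take_of_mem_drop ha (by rw [hdrop]; exact List.mem_cons_self)
    have h2 : 1 ≤ (l.drop n).countP (fun v => decide (v ≤ m)) := by
      rw [hdrop, List.countP_cons]
      simp
    have h3 : (l.take n).length = n := by
      rw [List.length_take]; omega
    omega
  have hcge : n+1 ≤ l.countP (fun v => decide (m ≤ v)) := by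
    have hsplit : l.countP (fun v => decide (m ≤ v))
        = (l.take n).countP (fun v => decide (m ≤ v))
          + (l.drop n).countP (fun v => decide (m ≤ v)) := by
      conv_lhs => rw [← List.take_append_drop n l]
      exact List.countP_append
    have h1 : (l.drop n).countP (fun v => decide (m ≤ v)) = (l.drop n).length := by
      apply List.countP_eq_length.2
      intro a ha
      simp only [decide_eq_true_eq]
      rcases (by rw [hdrop] at ha; exact List.mem_cons.1 ha) with h | h
      · exact le_of_eq h.symm
      · refine hsort.rel_of_mem_take_of_mem_drop (i := n+1) ?_ h
        have hn1 : n < (l.take (n+1)).length := by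
          rw [List.length_take]; omega
        have : (l.take (n+1))[n]'hn1 = l[n] := List.getElem_take
        rw [hm', ← this]
        exact List.getElem_mem hn1
    have h2 : (l.drop n).length = n+1 := by
      rw [List.length_drop]; omega
    omega
  -- membership of m in s, hence bounds 0 ≤ m ≤ 1
  have hms : m ∈ s := by
    rw [hm']
    exact (Multiset.mem_sort _).1 (List.getElem_mem hnl)
  have hm01 : 0 ≤ m ∧ m ≤ 1 := by
    rw [hs] at hms
    rcases Multiset.mem_add.1 hms with h | h
    · obtain ⟨i, _, hi⟩ := Multiset.mem_map.1 h
      rw [← hi]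
      exact ⟨(hx i).1, (hx i).2⟩
    · obtain ⟨k, hk, hkm⟩ := Multiset.mem_map.1 h
      rw [← hkm]
      have hk' : k ≤ n := by
        rw [Finset.mem_val, Finset.mem_range] at hk; omega
      constructor
      · positivity
      · rw [div_le_one hn0]; exact_mod_cast hk'
  obtain ⟨hm0, hm1⟩ := hm01
  -- transfer counts to the two parts
  classical
  set A : Finset (Fin n) := Finset.univ.filter (fun i => x i ≤ m) with hA
  set B : Finset (Fin n) := Finset.univ.filter (fun i => m ≤ x i) with hB
  set C : Finset ℕ := (Finset.range (n+1)).filter (fun k => (k:ℝ)/n ≤ m) with hC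
  set D : Finset ℕ := (Finset.range (n+1)).filter (fun k => m ≤ (k:ℝ)/n) with hD
  have hsplitP : ∀ p : ℝ → Prop, ∀ _ : DecidablePred p, Multiset.countP p s =
      (Finset.univ.filter (fun i => p (x i))).card
        + ((Finset.range (n+1)).filter (fun k : ℕ => p ((k:ℝ)/n))).card := by
    intro p hp
    rw [hs, Multiset.countP_add, Multiset.countP_map, Multiset.countP_map]
    rfl
  have hcount1 : Multiset.countP (fun v => v ≤ m) s = l.countP (fun v => decide (v ≤ m)) := by
    conv_lhs => rw [← Multiset.sort_eq s (· ≤ ·)]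
    exact Multiset.coe_countP _ _
  have hcount2 : Multiset.countP (fun v => m ≤ v) s = l.countP (fun v => decide (m ≤ v)) := by
    conv_lhs => rw [← Multiset.sort_eq s (· ≤ ·)]
    exact Multiset.coe_countP _ _
  have hac : n+1 ≤ A.card + C.card := by
    rw [hA, hC]
    calc n+1 ≤ l.countP (fun v => decide (v ≤ m)) := hcle
    _ = Multiset.countP (fun v => v ≤ m) s := hcount1.symm
    _ = _ := hsplitP (fun v => v ≤ m) _
  have hbd : n+1 ≤ B.card + D.card := by
    rw [hB, hD]
    calc n+1 ≤ l.countP (fun v => decide (m ≤ v)) := hcge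
    _ = Multiset.countP (fun v => m ≤ v) s := hcount2.symm
    _ = _ := hsplitP (fun v => m ≤ v) _
  -- bound phantom counts
  have hCb : (C.card : ℝ) ≤ n*m + 1 := by
    have hsub : C ⊆ Finset.range (Nat.floor ((n:ℝ)*m) + 1) := by
      intro k hk
      rw [hC, Finset.mem_filter] at hk
      rw [Finset.mem_range, Nat.lt_succ_iff]
      apply Nat.le_floor
      rw [div_le_iff₀ hn0] at hk
      linarith [hk.2]
    have := Finset.card_le_card hsub
    rw [Finset.card_range] at this
    have hfl : (Nat.floor ((n:ℝ)*m) : ℝ) ≤ n*m := Nat.floor_le (by positivity)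
    have : (C.card : ℝ) ≤ (Nat.floor ((n:ℝ)*m) : ℝ) + 1 := by exact_mod_cast this
    linarith
  have hDb : (D.card : ℝ) ≤ (n:ℝ) + 1 - n*m := by
    have hceil : Nat.ceil ((n:ℝ)*m) ≤ n := by
      apply Nat.ceil_le.2
      nlinarith
    have hsub : D ⊆ Finset.Ico (Nat.ceil ((n:ℝ)*m)) (n+1) := by
      intro k hk
      rw [hD, Finset.mem_filter, Finset.mem_range] at hk
      rw [Finset.mem_Ico]
      refine ⟨Nat.ceil_le.2 ?_, hk.1⟩
      rw [le_div_iff₀ hn0] at hk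
      nlinarith [hk.2]
    have h1 := Finset.card_le_card hsub
    rw [Nat.card_Ico] at h1
    have h2 : (D.card : ℝ) ≤ ((n+1 : ℕ) : ℝ) - (Nat.ceil ((n:ℝ)*m) : ℝ) := by
      rw [← Nat.cast_sub (by omega)]
      exact_mod_cast h1
    have h3 : (n:ℝ)*m ≤ (Nat.ceil ((n:ℝ)*m) : ℝ) := Nat.le_ceil _
    push_cast at h2
    linarith
  -- derived voter-count bounds
  have haR : (n:ℝ) - n*m ≤ A.card := by
    have : ((n:ℝ)+1) ≤ (A.card : ℝ) + C.card := by exact_mod_cast hac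
    linarith
  have hbR : (n:ℝ)*m ≤ B.card := by
    have : ((n:ℝ)+1) ≤ (B.card : ℝ) + D.card := by exact_mod_cast hbd
    linarith
  have haN : (A.card : ℝ) ≤ n := by
    exact_mod_cast Finset.card_le_card (Finset.subset_univ A) |>.trans (le_of_eq (by simp))
  -- sum bounds
  set S : ℝ := ∑ i, x i with hS
  have hSub : S ≤ (A.card : ℝ) * m + ((n:ℝ) - A.card) := by
    have hsplit : S = (∑ i ∈ A, x i) + ∑ i ∈ Finset.univ.filter (fun i => ¬ (x i ≤ m)), x i := by
      rw [hS, hA]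
      exact (Finset.sum_filter_add_sum_filter_not _ _ _).symm
    have h1 : (∑ i ∈ A, x i) ≤ A.card • m := by
      apply Finset.sum_le_card_nsmul
      intro i hi
      exact (Finset.mem_filter.1 hi).2
    have h2 : (∑ i ∈ Finset.univ.filter (fun i => ¬ (x i ≤ m)), x i)
        ≤ (Finset.univ.filter (fun i => ¬ (x i ≤ m))).card • (1:ℝ) := by
      apply Finset.sum_le_card_nsmul
      intro i _
      exact (hx i).2
    have h3 : A.card + (Finset.univ.filter (fun i => ¬ (x i ≤ m))).card = n := by
      rw [hA, Finset.card_filter_add_card_filter_not]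
      simp
    have h4 : ((Finset.univ.filter (fun i => ¬ (x i ≤ m))).card : ℝ) = (n:ℝ) - A.card := by
      have := h3
      push_cast [← this]
      ring
    rw [hsplit]
    rw [nsmul_eq_mul] at h1
    rw [nsmul_eq_mul, mul_one] at h2
    rw [h4] at h2
    linarith
  have hSlb : (B.card : ℝ) * m ≤ S := by
    have h1 : (B.card) • m ≤ ∑ i ∈ B, x i := by
      apply Finset.card_nsmul_le_sum
      intro i hi
      exact (Finset.mem_filter.1 hi).2
    have h2 : (∑ i ∈ B, x i) ≤ S := by
      apply Finset.sum_le_sum_of_subset_of_nonneg (Finset.subset_univ B)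
      intro i _ _
      exact (hx i).1
    rw [nsmul_eq_mul] at h1
    linarith
  -- finish
  clear_value s l m S
  clear hms hdrop hm' hcle hcge hcount1 hcount2 hsplitP hac hbd hph hlen hnl hsort hCb hDb
  have hmean : S / n * n = S := div_mul_cancel₀ _ (ne_of_gt hn0)
  rw [abs_le]
  constructor
  · nlinarith [hSub, haR, sq_nonneg (2*m-1), mul_nonneg (sub_nonneg.2 haR) (sub_nonneg.2 hm1), hn0, hmean]
  · nlinarith [hSlb, hbR, sq_nonneg (2*m-1), mul_nonneg (le_trans (by positivity) hbR) hm0, hn0, hmean, mul_le_mul_of_nonneg_right hbR hm0]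
end

section
/- The Piecewise Uniform mechanism is proportional: for every preference profile V over 3 projects consisting solely of single-minded voters, the output of the Piecewise Uniform mechanism on V equals the proportional division V̄. -/
open Finset

lemma median_eq_of_counts (s : Multiset ℝ) (n : ℕ) (a : ℝ)
    (hcard : Multiset.card s = 2 * n + 1)
    (hlt : Multiset.card (s.filter (· < a)) ≤ n)
    (hgt : Multiset.card (s.filter (a < ·)) ≤ n) :
    medianAt s n = a := by
  classical
  set l := s.sort (· ≤ ·) with hl
  have hsorted : l.Pairwise (· ≤ ·) := Multiset.pairwise_sort s _
  have hlen : l.length = 2 * n + 1 := by rw [hl, Multiset.length_sort, hcard]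
  have hn : n < l.length := by omega
  have hmed : medianAt s n = l[n] := by
    unfold medianAt
    exact List.getD_eq_getElem _ _ hn
  have hcoe : (↑l : Multiset ℝ) = s := Multiset.sort_eq s _
  have hcount1 : l.countP (fun x => decide (x < a)) ≤ n := by
    have := hlt
    rw [← hcoe] at this
    simpa [List.countP_eq_length_filter, Multiset.filter_coe] using this
  have hcount2 : l.countP (fun x => decide (a < x)) ≤ n := by
    have := hgt
    rw [← hcoe] at this
    simpa [List.countP_eq_length_filter, Multiset.filter_coe] using this
  have h1 : ¬ l[n] < a := by
    intro h
    have : (l.take (n+1)).countP (fun x => decide (x < a)) = (l.take (n+1)).length := by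
      rw [List.countP_eq_length]
      intro x hx
      obtain ⟨i, hi, rfl⟩ := List.mem_iff_getElem.mp hx
      have hi' : i < l.length := by
        have := List.length_take (i := n+1) (l := l); omega
      rw [List.getElem_take]
      have : l[i] ≤ l[n] := hsorted.rel_get_of_le (by
        simp only [List.length_take] at hi
        simpa using (by omega : i ≤ n))
      simp [lt_of_le_of_lt this h]
    have hle := List.Sublist.countP_le (p := fun x => decide (x < a)) (List.take_sublist (n+1) l)
    rw [this] at hle
    rw [List.length_take] at hle
    omega
  have h2 : ¬ a < l[n] := by
    intro h
    have : (l.drop n).countP (fun x => decide (a < x)) = (l.drop n).length := by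
      rw [List.countP_eq_length]
      intro x hx
      obtain ⟨i, hi, rfl⟩ := List.mem_iff_getElem.mp hx
      have hi' : n + i < l.length := by
        rw [List.length_drop] at hi; omega
      rw [List.getElem_drop]
      have h2 : l[n] ≤ l[n+i]'hi' := hsorted.rel_get_of_le (by simp)
      simpa using lt_of_lt_of_le h h2
    have hle := List.Sublist.countP_le (p := fun x => decide (a < x)) (List.drop_sublist n l)
    rw [this] at hle
    rw [List.length_drop] at hle
    omega
  rw [hmed]
  exact le_antisymm (not_lt.mp h2) (not_lt.mp h1)

lemma pu_eq (n k : ℕ) (t : ℝ) : puPhantom n k t =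
    (if t < 1/2 then
      (if (k:ℝ)/(n:ℝ) < 1/2 then 0 else 2*t*(2*((k:ℝ)/(n:ℝ)) - 1))
    else
      (if (k:ℝ)/(n:ℝ) < 1/2 then ((k:ℝ)/(n:ℝ))*(2*t-1)
       else ((k:ℝ)/(n:ℝ))*(3-2*t) - 2 + 2*t)) := by
  unfold puPhantom
  split_ifs <;> ring

lemma puPhantom_nonneg {n : ℕ} (hn : 1 ≤ n) (k : ℕ) (t : ℝ)
    (ht : t ∈ Set.Icc (0:ℝ) 1) : 0 ≤ puPhantom n k t := by
  obtain ⟨ht0, ht1⟩ := ht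
  have hnp : (0:ℝ) < n := by exact_mod_cast hn
  have hx0 : (0:ℝ) ≤ (k:ℝ)/(n:ℝ) := by positivity
  rw [pu_eq]
  split_ifs with h1 h2 h2 <;> nlinarith

lemma puPhantom_le {n : ℕ} (hn : 1 ≤ n) {k : ℕ} (hk : k ≤ n) (t : ℝ)
    (ht : t ∈ Set.Icc (0:ℝ) 1) : puPhantom n k t ≤ (k:ℝ)/(n:ℝ) := by
  obtain ⟨ht0, ht1⟩ := ht
  have hnp : (0:ℝ) < n := by exact_mod_cast hn
  have hx0 : (0:ℝ) ≤ (k:ℝ)/(n:ℝ) := by positivity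
  have hx1 : (k:ℝ)/(n:ℝ) ≤ 1 := by
    rw [div_le_one hnp]; exact_mod_cast hk
  rw [pu_eq]
  split_ifs with h1 h2 h2 <;> nlinarith

lemma puPhantom_mono {n : ℕ} (hn : 1 ≤ n) {k k' : ℕ} (hkk : k ≤ k') (hk' : k' ≤ n)
    (t : ℝ) (ht : t ∈ Set.Icc (0:ℝ) 1) : puPhantom n k t ≤ puPhantom n k' t := by
  obtain ⟨ht0, ht1⟩ := ht
  have hnp : (0:ℝ) < n := by exact_mod_cast hn
  have hx0 : (0:ℝ) ≤ (k:ℝ)/(n:ℝ) := by positivity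
  have hxx : (k:ℝ)/(n:ℝ) ≤ (k':ℝ)/(n:ℝ) := by
    gcongr
  have hx1 : (k':ℝ)/(n:ℝ) ≤ 1 := by
    rw [div_le_one hnp]; exact_mod_cast hk'
  rw [pu_eq, pu_eq]
  split_ifs with h1 h2 h3 h2 h3 <;> nlinarith

/-- The Piecewise Uniform mechanism is proportional: on every profile
over 3 projects consisting solely of single-minded voters, its output (the medians
at any feasible `t*`) equals the proportional division. -/
theorem piecewise_uniform_proportional {n : ℕ} (hn : 1 ≤ n)
    (V : Fin n → Fin 3 → ℝ) (hV : ∀ i, IsDivision (V i))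
    (hsm : ∀ i, ∃ j, V i j = 1)
    (t : ℝ) (ht : t ∈ Set.Icc (0:ℝ) 1)
    (hfeas : ∑ j, phantomMedian V (fun k => puPhantom n k t) j = 1) :
    ∀ j, phantomMedian V (fun k => puPhantom n k t) j = propDiv V j := by
  classical
  have hnp : (0:ℝ) < n := by exact_mod_cast hn
  have hcoord : ∀ i j, V i j = 0 ∨ V i j = 1 := by
    intro i j
    obtain ⟨j0, hj0⟩ := hsm i
    by_cases hjj : j = j0
    · right; rw [hjj, hj0]
    · left
      obtain ⟨hb, hs⟩ := hV i
      have h3 : V i 0 + V i 1 + V i 2 = 1 := by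
        rw [← hs]; simp [Fin.sum_univ_three]
      fin_cases j <;> fin_cases j0 <;> simp_all <;>
        linarith [(hb 0).1, (hb 1).1, (hb 2).1]
  set N : Fin 3 → ℕ := fun j => (Finset.univ.filter (fun i => V i j = 1)).card with hNdef
  have hNle : ∀ j, N j ≤ n := by
    intro j
    calc N j ≤ Finset.univ.card := Finset.card_filter_le _ _
    _ = n := by simp
  have hsum : ∀ j, (∑ i, V i j) = (N j : ℝ) := by
    intro j
    rw [hNdef, ← Finset.sum_boole]
    refine Finset.sum_congr rfl fun i _ => ?_
    rcases hcoord i j with h | h <;> simp [h]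
  have hcard1 : ∀ j, (Finset.univ.filter (fun i => ¬ V i j = 1)).card = n - N j := by
    intro j
    rw [Finset.filter_not, Finset.card_sdiff_of_subset (Finset.filter_subset _ _)]
    simp [hNdef]
  have hmed : ∀ j, phantomMedian V (fun k => puPhantom n k t) j
      = puPhantom n (N j) t := by
    intro j
    set a := puPhantom n (N j) t with ha
    have ha0 : 0 ≤ a := puPhantom_nonneg hn _ t ht
    have ha1 : a ≤ 1 := by
      refine (puPhantom_le hn (hNle j) t ht).trans ?_
      rw [div_le_one hnp]; exact_mod_cast hNle j
    unfold phantomMedian projValues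
    apply median_eq_of_counts
    · rw [Multiset.card_add, Multiset.card_map, Multiset.card_map]
      simp; omega
    · rw [Multiset.filter_add, Multiset.card_add]
      have c1 : Multiset.card (Multiset.filter (· < a)
          (Multiset.map (fun i => V i j) Finset.univ.val)) ≤ n - N j := by
        rw [Multiset.filter_map, Multiset.card_map]
        have : Multiset.card (Multiset.filter ((· < a) ∘ fun i => V i j) Finset.univ.val)
            = (Finset.univ.filter (fun i => V i j < a)).card := rfl
        rw [this, ← hcard1 j]
        apply Finset.card_le_card
        intro i hi
        simp only [Finset.mem_filter, Finset.mem_univ, true_and] at *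
        intro h1; rw [h1] at hi; linarith
      have c2 : Multiset.card (Multiset.filter (· < a)
          (Multiset.map (fun k => puPhantom n k t) (Finset.range (n+1)).val)) ≤ N j := by
        rw [Multiset.filter_map, Multiset.card_map]
        have : Multiset.card (Multiset.filter ((· < a) ∘ fun k => puPhantom n k t)
            (Finset.range (n+1)).val)
            = ((Finset.range (n+1)).filter (fun k => puPhantom n k t < a)).card := rfl
        rw [this]
        have hsub : (Finset.range (n+1)).filter (fun k => puPhantom n k t < a)
            ⊆ Finset.range (N j) := by
          intro k hk
          simp only [Finset.mem_filter, Finset.mem_range] at *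
          by_contra hc
          have hk' : N j ≤ k := by omega
          have := puPhantom_mono hn hk' (by omega) t ht
          exact absurd hk.2 (not_lt.mpr this)
        calc _ ≤ (Finset.range (N j)).card := Finset.card_le_card hsub
        _ = N j := Finset.card_range _
      refine le_trans (Nat.add_le_add c1 c2) ?_
      have := hNle j
      omega
    · rw [Multiset.filter_add, Multiset.card_add]
      have c1 : Multiset.card (Multiset.filter (a < ·)
          (Multiset.map (fun i => V i j) Finset.univ.val)) ≤ N j := by
        rw [Multiset.filter_map, Multiset.card_map]
        have : Multiset.card (Multiset.filter ((a < ·) ∘ fun i => V i j) Finset.univ.val)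
            = (Finset.univ.filter (fun i => a < V i j)).card := rfl
        rw [this, hNdef]
        apply Finset.card_le_card
        intro i hi
        simp only [Finset.mem_filter, Finset.mem_univ, true_and] at *
        rcases hcoord i j with h | h
        · rw [h] at hi; linarith
        · exact h
      have c2 : Multiset.card (Multiset.filter (a < ·)
          (Multiset.map (fun k => puPhantom n k t) (Finset.range (n+1)).val)) ≤ n - N j := by
        rw [Multiset.filter_map, Multiset.card_map]
        have e : Multiset.card (Multiset.filter ((a < ·) ∘ fun k => puPhantom n k t)
            (Finset.range (n+1)).val)
            = ((Finset.range (n+1)).filter (fun k => a < puPhantom n k t)).card := rfl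
        rw [e]
        have hsub : (Finset.range (n+1)).filter (fun k => a < puPhantom n k t)
            ⊆ Finset.range (n+1) \ Finset.range (N j + 1) := by
          intro k hk
          simp only [Finset.mem_filter, Finset.mem_range, Finset.mem_sdiff] at *
          refine ⟨hk.1, ?_⟩
          by_contra hc
          have hk' : k ≤ N j := by omega
          have := puPhantom_mono hn hk' (hNle j) t ht
          exact absurd hk.2 (not_lt.mpr this)
        calc _ ≤ (Finset.range (n+1) \ Finset.range (N j + 1)).card :=
              Finset.card_le_card hsub
        _ = n - N j := by
              rw [Finset.card_sdiff_of_subset (Finset.range_subset_range.mpr (by have := hNle j; omega : N j + 1 ≤ n +1))]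
              simp
      refine le_trans (Nat.add_le_add c1 c2) ?_
      have := hNle j
      omega
  have hle : ∀ j, puPhantom n (N j) t ≤ (N j : ℝ)/(n:ℝ) :=
    fun j => puPhantom_le hn (hNle j) t ht
  have hNn : (N 0 : ℝ) + N 1 + N 2 = n := by
    have e : ∑ j : Fin 3, ∑ i, V i j = (n:ℝ) := by
      rw [Finset.sum_comm]
      have : ∀ i, ∑ j, V i j = 1 := fun i => (hV i).2
      simp [this]
    rw [Fin.sum_univ_three, hsum 0, hsum 1, hsum 2] at e
    exact e
  have hfeas' : puPhantom n (N 0) t + puPhantom n (N 1) t + puPhantom n (N 2) t = 1 := by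
    rw [Fin.sum_univ_three, hmed 0, hmed 1, hmed 2] at hfeas
    exact hfeas
  have hsumle : (N 0 : ℝ)/(n:ℝ) + (N 1 : ℝ)/(n:ℝ) + (N 2 : ℝ)/(n:ℝ) = 1 := by
    field_simp
    linarith [hNn]
  have heq : ∀ j, puPhantom n (N j) t = (N j : ℝ)/(n:ℝ) := by
    have h0 := hle 0; have h1 := hle 1; have h2 := hle 2
    have e0 : puPhantom n (N 0) t = (N 0 : ℝ)/(n:ℝ) := by linarith
    have e1 : puPhantom n (N 1) t = (N 1 : ℝ)/(n:ℝ) := by linarith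
    have e2 : puPhantom n (N 2) t = (N 2 : ℝ)/(n:ℝ) := by linarith
    intro j
    fin_cases j
    · exact e0
    · exact e1
    · exact e2
  intro j
  rw [hmed j, heq j]
  unfold propDiv
  rw [hsum j]
end

section
/- Let x, y, z be divisions over m projects (vectors in [0,1]^m summing to 1) with x ≠ y. Then there exists a pair of distinct projects j, j' such that either (i) x_j ≤ min{y_j, z_j} and x_{j'} ≥ max{y_{j'}, z_{j'}}, or (ii) y_j ≤ x_j ≤ z_j and z_{j'} ≤ x_{j'} ≤ y_{j'}. -/
open Finset

/-- For divisions `x, y, z` over `m` projects with `x ≠ y`, there are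
distinct projects `j, j'` with either (i) `x j ≤ min (y j) (z j)` and
`x j' ≥ max (y j') (z j')`, or (ii) `y j ≤ x j ≤ z j` and `z j' ≤ x j' ≤ y j'`. -/
theorem guaranteed_two_types {m : ℕ} (x y z : Fin m → ℝ)
    (hx : IsDivision x) (hy : IsDivision y) (hz : IsDivision z) (hxy : x ≠ y) :
    ∃ j j' : Fin m, j ≠ j' ∧
      ((x j ≤ min (y j) (z j) ∧ max (y j') (z j') ≤ x j') ∨
       (y j ≤ x j ∧ x j ≤ z j ∧ z j' ≤ x j' ∧ x j' ≤ y j')) := by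
  have hs : ∑ j, x j = ∑ j, y j := hx.2.trans hy.2.symm
  have hsz : ∑ j, x j = ∑ j, z j := hx.2.trans hz.2.symm
  -- existence of a coordinate where x < y
  have hj0 : ∃ j, x j < y j := by
    by_contra h
    push_neg at h
    obtain ⟨j, hj⟩ := Function.ne_iff.mp hxy
    have : ∑ j, y j < ∑ j, x j :=
      Finset.sum_lt_sum (fun i _ => h i) ⟨j, Finset.mem_univ j, lt_of_le_of_ne (h j) (Ne.symm hj)⟩
    linarith
  have hj1 : ∃ j, y j < x j := by
    by_contra h
    push_neg at h
    obtain ⟨j, hj⟩ := Function.ne_iff.mp hxy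
    have : ∑ j, x j < ∑ j, y j :=
      Finset.sum_lt_sum (fun i _ => h i) ⟨j, Finset.mem_univ j, lt_of_le_of_ne (h j) hj⟩
    linarith
  obtain ⟨j0, hj0⟩ := hj0
  obtain ⟨j1, hj1⟩ := hj1
  have hne : j0 ≠ j1 := by intro h; rw [h] at hj0; linarith
  have hnonempty : (Finset.univ : Finset (Fin m)).Nonempty := ⟨j0, Finset.mem_univ j0⟩
  by_cases hA : x j0 ≤ z j0
  · by_cases hBC : x j1 ≤ z j1
    · -- j0 ∈ A, j1 ∈ C; need some b ∈ B or d ∈ D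
      by_cases hB : ∃ b, y b ≤ x b ∧ z b ≤ x b
      · obtain ⟨b, hb1, hb2⟩ := hB
        refine ⟨j0, b, ?_, Or.inl ⟨le_min hj0.le hA, max_le hb1 hb2⟩⟩
        intro h; rw [h] at hj0; linarith
      · by_cases hD : ∃ d, z d ≤ x d ∧ x d ≤ y d
        · obtain ⟨d, hd1, hd2⟩ := hD
          refine ⟨j1, d, ?_, Or.inr ⟨hj1.le, hBC, hd1, hd2⟩⟩
          intro h; rw [h] at hj1; linarith
        · exfalso
          push_neg at hB hD
          have hlt : ∀ j, x j < z j := by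
            intro j
            by_contra h
            push_neg at h
            have h1 : y j < x j := hD j h
            have h2 : x j < z j := hB j h1.le
            linarith
          have : ∑ j, x j < ∑ j, z j :=
            Finset.sum_lt_sum_of_nonempty hnonempty (fun i _ => hlt i)
          linarith
    · -- j0 ∈ A, j1 ∈ B
      push_neg at hBC
      exact ⟨j0, j1, hne, Or.inl ⟨le_min hj0.le hA, max_le hj1.le hBC.le⟩⟩
  · push_neg at hA
    by_cases hBC : x j1 ≤ z j1
    · -- j0 ∈ D, j1 ∈ C
      exact ⟨j1, j0, hne.symm, Or.inr ⟨hj1.le, hBC, hA.le, hj0.le⟩⟩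
    · -- j0 ∈ D, j1 ∈ B; need some c ∈ C or a ∈ A
      push_neg at hBC
      by_cases hC : ∃ c, y c ≤ x c ∧ x c ≤ z c
      · obtain ⟨c, hc1, hc2⟩ := hC
        refine ⟨c, j0, ?_, Or.inr ⟨hc1, hc2, hA.le, hj0.le⟩⟩
        intro h; rw [h] at hc1; linarith
      · by_cases hA' : ∃ a, x a ≤ y a ∧ x a ≤ z a
        · obtain ⟨a, ha1, ha2⟩ := hA'
          refine ⟨a, j1, ?_, Or.inl ⟨le_min ha1 ha2, max_le hj1.le hBC.le⟩⟩
          intro h; rw [h] at ha1; linarith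
        · exfalso
          push_neg at hC hA'
          have hlt : ∀ j, z j < x j := by
            intro j
            rcases le_total (y j) (x j) with h | h
            · exact hC j h
            · exact hA' j h
          have : ∑ j, z j < ∑ j, x j :=
            Finset.sum_lt_sum_of_nonempty hnonempty (fun i _ => hlt i)
          linarith
end

section
/- Let f be a moving phantom mechanism for m = 3 projects, let V be a preference profile, and let i be a voter that is neither single-minded, double-minded, nor fully-satisfied (with respect to f and V). Then there exists a division v'_i such that ℓ(V_{-i}, v'_i) ≥ ℓ(V); moreover, whenever ℓ(V_{-i}, v'_i) = ℓ(V), the division v'_i can be taken to be single-minded, double-minded, or fully-satisfied, with f(V) = f(V_{-i}, v'_i). -/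
open Finset

/-! ### Auxiliary lemmas -/

lemma medianAt_le_iff (s : Multiset ℝ) (k : ℕ) (hk : k < Multiset.card s) (c : ℝ) :
    medianAt s k ≤ c ↔ k + 1 ≤ s.countP (· ≤ c) := by
  classical
  set l := s.sort (· ≤ ·) with hl
  have hlen : l.length = Multiset.card s := Multiset.length_sort _
  have hsort : l.Pairwise (· ≤ ·) := Multiset.pairwise_sort _ _
  have hklen : k < l.length := hlen ▸ hk
  have hcount : s.countP (· ≤ c) = l.countP (fun x => decide (x ≤ c)) := by
    conv_lhs => rw [← Multiset.sort_eq s (· ≤ ·), ← hl]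
    exact Multiset.coe_countP _ _
  rw [medianAt, ← hl, List.getD_eq_getElem l 0 hklen, hcount]
  constructor
  · intro h
    have hsub : (l.take (k+1)).countP (fun x => decide (x ≤ c)) ≤
        l.countP (fun x => decide (x ≤ c)) := (List.take_sublist _ _).countP_le
    have hall : (l.take (k+1)).countP (fun x => decide (x ≤ c)) = (l.take (k+1)).length := by
      rw [List.countP_eq_length]
      intro a ha
      obtain ⟨j, hj, rfl⟩ := List.getElem_of_mem ha
      have hjlen : j < l.length := lt_of_lt_of_le hj ((l.take_sublist (k+1)).length_le)
      simp only [List.getElem_take]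
      have : l[j] ≤ l[k] := by
        rcases eq_or_lt_of_le (show j ≤ k by
          have := hj; simp [List.length_take] at this; omega) with h' | h'
        · subst h'; rfl
        · exact hsort.rel_get_of_lt (a := ⟨j, hjlen⟩) (b := ⟨k, hklen⟩) h'
      simpa using le_trans this h
    have hlt : k + 1 ≤ (l.take (k+1)).length := by simp [List.length_take]; omega
    omega
  · intro h
    by_contra hc
    push_neg at hc
    have hdrop : (l.drop k).countP (fun x => decide (x ≤ c)) = 0 := by
      rw [List.countP_eq_zero]
      intro a ha
      obtain ⟨j, hj, rfl⟩ := List.getElem_of_mem ha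
      rw [List.getElem_drop]
      have hkj : k ≤ k + j := Nat.le_add_right _ _
      have hlt2 : k + j < l.length := by
        have := hj; simp [List.length_drop] at this; omega
      have : l[k] ≤ l[k+j] := hsort.rel_get_of_le (a := ⟨k, hklen⟩) (b := ⟨k+j, hlt2⟩) hkj
      simp only [decide_eq_true_eq]
      intro hle
      exact absurd (le_trans this hle) (not_le.mpr hc)
    have := List.countP_append (l₁ := l.take k) (l₂ := l.drop k) (p := fun x => decide (x ≤ c))
    rw [List.take_append_drop] at this
    have htk : (l.take k).countP (fun x => decide (x ≤ c)) ≤ k := by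
      have := List.countP_le_length (p := fun x => decide (x ≤ c)) (l := l.take k)
      simp [List.length_take] at this; omega
    omega

lemma medianAt_mem (s : Multiset ℝ) (k : ℕ) (hk : k < Multiset.card s) : medianAt s k ∈ s := by
  have hlen : (s.sort (· ≤ ·)).length = Multiset.card s := Multiset.length_sort _
  have hklen : k < (s.sort (· ≤ ·)).length := hlen ▸ hk
  rw [medianAt, List.getD_eq_getElem _ 0 hklen]
  exact Multiset.mem_sort (· ≤ ·) |>.mp (List.getElem_mem _)

lemma countP_mono_mem {α : Type*} (s : Multiset α) (p q : α → Prop)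
    [DecidablePred p] [DecidablePred q] (h : ∀ a ∈ s, p a → q a) :
    s.countP p ≤ s.countP q := by
  induction s using Multiset.induction_on with
  | empty => simp
  | cons a t ih =>
    rw [Multiset.countP_cons, Multiset.countP_cons]
    have ht := ih (fun x hx => h x (Multiset.mem_cons_of_mem hx))
    have ha := h a (Multiset.mem_cons_self a t)
    by_cases h1 : p a
    · rw [if_pos h1, if_pos (ha h1)]; omega
    · rw [if_neg h1]; split_ifs <;> omega

lemma card_projValues {n m : ℕ} (V : Fin n → Fin m → ℝ) (p : ℕ → ℝ) (j : Fin m) :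
    Multiset.card (projValues V p j) = 2*n+1 := by
  simp [projValues]; omega

lemma medianAt_replace {r : Multiset ℝ} {x x' M : ℝ} {n : ℕ}
    (hcard : Multiset.card (x ::ₘ r) = 2*n+1)
    (hM : medianAt (x ::ₘ r) n = M)
    (hside : (M < x ∧ M ≤ x') ∨ (x < M ∧ x' ≤ M) ∨ x' = x) :
    medianAt (x' ::ₘ r) n = M := by
  classical
  have hcard' : Multiset.card (x' ::ₘ r) = 2*n+1 := by
    simp at hcard ⊢; omega
  have hk : n < Multiset.card (x ::ₘ r) := by omega
  have hk' : n < Multiset.card (x' ::ₘ r) := by omega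
  rcases hside with ⟨h1, h2⟩ | ⟨h1, h2⟩ | h
  · have hMle : n + 1 ≤ Multiset.countP (· ≤ M) r := by
      have := (medianAt_le_iff _ n hk M).mp (le_of_eq hM)
      rw [Multiset.countP_cons] at this
      simp [not_le.mpr h1] at this
      exact this
    have hle : medianAt (x' ::ₘ r) n ≤ M := by
      rw [medianAt_le_iff _ n hk' M, Multiset.countP_cons]
      omega
    refine le_antisymm hle ?_
    by_contra hc
    push_neg at hc
    set M' := medianAt (x' ::ₘ r) n with hM'
    have : n + 1 ≤ Multiset.countP (· ≤ M') (x' ::ₘ r) :=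
      (medianAt_le_iff _ n hk' M').mp le_rfl
    rw [Multiset.countP_cons, if_neg (by push_neg; linarith)] at this
    have : n + 1 ≤ Multiset.countP (· ≤ M') (x ::ₘ r) := by
      rw [Multiset.countP_cons]; omega
    have := (medianAt_le_iff _ n hk M').mpr this
    rw [hM] at this; linarith
  · have hcnt : n + 1 ≤ Multiset.countP (· ≤ M) (x ::ₘ r) :=
      (medianAt_le_iff _ n hk M).mp (le_of_eq hM)
    rw [Multiset.countP_cons, if_pos (le_of_lt h1)] at hcnt
    have hle : medianAt (x' ::ₘ r) n ≤ M := by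
      rw [medianAt_le_iff _ n hk' M, Multiset.countP_cons, if_pos h2]
      omega
    refine le_antisymm hle ?_
    by_contra hc
    push_neg at hc
    set M' := medianAt (x' ::ₘ r) n with hM'
    have hM'cnt : n + 1 ≤ Multiset.countP (· ≤ M') (x' ::ₘ r) :=
      (medianAt_le_iff _ n hk' M').mp le_rfl
    rw [Multiset.countP_cons] at hM'cnt
    rcases lt_or_ge M' x with hlt | hge
    · have hr : n ≤ Multiset.countP (· ≤ M') r := by
        split_ifs at hM'cnt <;> omega
      have hmono : Multiset.countP (· ≤ M') r ≤ Multiset.countP (· ≤ x) r := by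
        rw [Multiset.countP_eq_card_filter, Multiset.countP_eq_card_filter]
        exact Multiset.card_le_card (Multiset.monotone_filter_right r
          (fun a ha => le_trans ha hlt.le))
      have hxx : n + 1 ≤ Multiset.countP (· ≤ x) (x ::ₘ r) := by
        rw [Multiset.countP_cons, if_pos le_rfl]; omega
      have := (medianAt_le_iff _ n hk x).mpr hxx
      rw [hM] at this; linarith
    · have hxcnt : Multiset.countP (· ≤ M') (x ::ₘ r) ≤ n := by
        by_contra hcc
        push_neg at hcc
        have := (medianAt_le_iff _ n hk M').mpr hcc
        rw [hM] at this; linarith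
      rw [Multiset.countP_cons, if_pos hge] at hxcnt
      split_ifs at hM'cnt <;> omega
  · subst h; exact hM

lemma phantomMedian_mono {n m : ℕ} (V : Fin n → Fin m → ℝ) (p p' : ℕ → ℝ)
    (h : ∀ k ≤ n, p k ≤ p' k) (j : Fin m) :
    phantomMedian V p j ≤ phantomMedian V p' j := by
  classical
  set M' := phantomMedian V p' j with hM'
  have hk : n < Multiset.card (projValues V p j) := by rw [card_projValues]; omega
  have hk' : n < Multiset.card (projValues V p' j) := by rw [card_projValues]; omega
  rw [phantomMedian, medianAt_le_iff _ n hk M']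
  have h1 : n + 1 ≤ Multiset.countP (· ≤ M') (projValues V p' j) :=
    (medianAt_le_iff _ n hk' M').mp le_rfl
  rw [projValues, Multiset.countP_add] at h1 ⊢
  have h2 : Multiset.countP (· ≤ M') (Multiset.map p' (Finset.range (n + 1)).val) ≤
      Multiset.countP (· ≤ M') (Multiset.map p (Finset.range (n + 1)).val) := by
    rw [Multiset.countP_map, Multiset.countP_map,
      ← Multiset.countP_eq_card_filter, ← Multiset.countP_eq_card_filter]
    apply countP_mono_mem
    intro a ha hle
    have han : a ≤ n := by
      have := Multiset.mem_range.mp ha; omega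
    exact le_trans (h a han) hle
  omega

lemma projValues_update {n m : ℕ} (V : Fin n → Fin m → ℝ) (i : Fin n)
    (v' : Fin m → ℝ) (p : ℕ → ℝ) (j : Fin m) :
    ∃ r : Multiset ℝ, projValues V p j = V i j ::ₘ r ∧
      projValues (Function.update V i v') p j = v' j ::ₘ r := by
  classical
  have hmem : i ∈ (univ : Finset (Fin n)).val := Finset.mem_univ_val i
  have hsplit : (univ : Finset (Fin n)).val = i ::ₘ (univ : Finset (Fin n)).val.erase i :=
    (Multiset.cons_erase hmem).symm
  refine ⟨Multiset.map (fun k => V k j) ((univ : Finset (Fin n)).val.erase i) +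
      Multiset.map p (Finset.range (n + 1)).val, ?_, ?_⟩
  · rw [projValues]
    conv_lhs => rw [hsplit]
    rw [Multiset.map_cons, Multiset.cons_add]
  · rw [projValues]
    conv_lhs => rw [hsplit]
    rw [Multiset.map_cons, Multiset.cons_add]
    congr 1
    · simp [Function.update_self]
    congr 1
    apply Multiset.map_congr rfl
    intro k hk
    have hne : k ≠ i := by
      have := (univ : Finset (Fin n)).nodup.mem_erase_iff.mp hk
      exact this.1
    simp [Function.update_of_ne hne]

lemma phantomMedian_mem_Icc {n m : ℕ} (Y : PhantomSystem n) (V : Fin n → Fin m → ℝ)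
    (hV : ∀ i, IsDivision (V i)) (t : ℝ) (ht : t ∈ Set.Icc (0:ℝ) 1) (j : Fin m) :
    0 ≤ phantomMedian V (fun k => Y.y k t) j ∧ phantomMedian V (fun k => Y.y k t) j ≤ 1 := by
  have hk : n < Multiset.card (projValues V (fun k => Y.y k t) j) := by
    rw [card_projValues]; omega
  have hmem := medianAt_mem _ n hk
  rw [projValues, Multiset.mem_add] at hmem
  rcases hmem with hmem | hmem
  · obtain ⟨i, _, heq⟩ := Multiset.mem_map.mp hmem
    rw [phantomMedian, projValues, ← heq]
    exact ⟨((hV i).1 j).1, ((hV i).1 j).2⟩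
  · obtain ⟨k, hkmem, heq⟩ := Multiset.mem_map.mp hmem
    have hkn : k ≤ n := by have := Multiset.mem_range.mp hkmem; omega
    have := Y.mem_Icc k hkn t ht
    rw [phantomMedian, projValues, ← heq]
    exact ⟨this.1, this.2⟩

lemma outcome_invariant {n m : ℕ} (hn : 1 ≤ n)
    (f : (Fin n → Fin m → ℝ) → (Fin m → ℝ)) (Y : PhantomSystem n)
    (hf : IsMovingPhantom f Y)
    (V : Fin n → Fin m → ℝ) (hV : ∀ i, IsDivision (V i))
    (i : Fin n) (v' : Fin m → ℝ) (hv' : IsDivision v')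
    (hside : ∀ j, (f V j < V i j → f V j ≤ v' j) ∧ (V i j < f V j → v' j ≤ f V j) ∧
      (V i j = f V j → v' j = V i j)) :
    f (Function.update V i v') = f V := by
  obtain ⟨t, ht, hsum, hmed⟩ := hf V hV
  have hWdiv : ∀ i', IsDivision (Function.update V i v' i') := by
    intro i'
    rcases eq_or_ne i' i with rfl | hne
    · rw [Function.update_self]; exact hv'
    · rw [Function.update_of_ne hne]; exact hV i'
  obtain ⟨t', ht', hsum', hmed'⟩ := hf (Function.update V i v') hWdiv
  have step1 : ∀ j, phantomMedian (Function.update V i v') (fun k => Y.y k t) j = f V j := by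
    intro j
    obtain ⟨r, hrV, hrW⟩ := projValues_update V i v' (fun k => Y.y k t) j
    have hcard : Multiset.card (V i j ::ₘ r) = 2*n+1 := by rw [← hrV, card_projValues]
    have hMval : medianAt (V i j ::ₘ r) n = f V j := by
      rw [← hrV]; exact (hmed j).symm
    rw [phantomMedian, hrW]
    apply medianAt_replace hcard hMval
    rcases lt_trichotomy (V i j) (f V j) with h | h | h
    · exact Or.inr (Or.inl ⟨h, (hside j).2.1 h⟩)
    · exact Or.inr (Or.inr ((hside j).2.2 h))
    · exact Or.inl ⟨h, (hside j).1 h⟩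
  have hsumW : (∑ j, phantomMedian (Function.update V i v') (fun k => Y.y k t) j) = 1 := by
    rw [Finset.sum_congr rfl (fun j _ => step1 j)]
    rw [Finset.sum_congr rfl (fun j _ => hmed j)] at *
    exact hsum
  have key : ∀ j, phantomMedian (Function.update V i v') (fun k => Y.y k t') j =
      phantomMedian (Function.update V i v') (fun k => Y.y k t) j := by
    rcases le_total t t' with hle | hle
    · have hmono : ∀ j, phantomMedian (Function.update V i v') (fun k => Y.y k t) j ≤
          phantomMedian (Function.update V i v') (fun k => Y.y k t') j := by
        intro j
        apply phantomMedian_mono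
        intro k hk
        exact Y.monoOn k hk ht ht' hle
      intro j
      have := (Finset.sum_eq_sum_iff_of_le (fun j _ => hmono j)).mp (by rw [hsumW, hsum'])
      exact (this j (Finset.mem_univ j)).symm
    · have hmono : ∀ j, phantomMedian (Function.update V i v') (fun k => Y.y k t') j ≤
          phantomMedian (Function.update V i v') (fun k => Y.y k t) j := by
        intro j
        apply phantomMedian_mono
        intro k hk
        exact Y.monoOn k hk ht' ht hle
      intro j
      have := (Finset.sum_eq_sum_iff_of_le (fun j _ => hmono j)).mp (by rw [hsumW, hsum'])
      exact this j (Finset.mem_univ j)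
  funext j
  rw [hmed' j, key j, step1 j]

lemma sum_three {a b c : Fin 3} (hab : a ≠ b) (hac : a ≠ c) (hbc : b ≠ c) (g : Fin 3 → ℝ) :
    ∑ j, g j = g a + g b + g c := by
  have hcov : ∀ j : Fin 3, j = a ∨ j = b ∨ j = c := by
    revert hab hac hbc; revert a b c; decide
  have huniv : (univ : Finset (Fin 3)) = {a, b, c} :=
    (Finset.eq_univ_iff_forall.mpr fun j => by rcases hcov j with rfl | rfl | rfl <;> simp).symm
  rw [huniv, Finset.sum_insert (by simp [hab, hac]), Finset.sum_insert (by simp [hbc]),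
    Finset.sum_singleton]
  ring

lemma doubleDiv_isDivision {w : Fin 3 → ℝ} (hw : ∀ j, 0 ≤ w j ∧ w j ≤ 1) {a b : Fin 3}
    (hab : a ≠ b) : IsDivision (doubleDiv w a b) := by
  constructor
  · intro j
    rcases eq_or_ne j a with rfl | h1
    · simpa [doubleDiv] using hw j
    rcases eq_or_ne j b with rfl | h2
    · simp only [doubleDiv, if_neg h1, if_pos rfl, if_true]
      constructor
      · linarith [(hw a).2]
      · linarith [(hw a).1]
    · simp [doubleDiv, h1, h2]
  · fin_cases a <;> fin_cases b <;>
      simp_all [doubleDiv, Fin.sum_univ_three]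

lemma doubleDiv_isDouble (w : Fin 3 → ℝ) {a b : Fin 3} (hab : a ≠ b) :
    DoubleMindedDiv w (doubleDiv w a b) :=
  ⟨a, b, hab, by simp [doubleDiv], by simp [doubleDiv, Ne.symm hab],
    fun k hka hkb => by simp [doubleDiv, hka, hkb]⟩

lemma singleDiv_isDivision (j : Fin 3) : IsDivision (singleDiv j) := by
  constructor
  · intro j'
    rcases eq_or_ne j' j with rfl | h
    · simp [singleDiv]
    · simp [singleDiv, h]
  · fin_cases j <;> simp [singleDiv, Fin.sum_univ_three]

lemma singleDiv_isSingle (j : Fin 3) : SingleMindedDiv (singleDiv j) :=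
  ⟨j, by simp [singleDiv]⟩

lemma assemble {n : ℕ} (hn : 1 ≤ n)
    (f : (Fin n → Fin 3 → ℝ) → (Fin 3 → ℝ))
    (V : Fin n → Fin 3 → ℝ) (i : Fin n)
    (hinv : ∀ v' : Fin 3 → ℝ, IsDivision v' →
      (∀ j, (f V j < V i j → f V j ≤ v' j) ∧ (V i j < f V j → v' j ≤ f V j) ∧
        (V i j = f V j → v' j = V i j)) →
      f (Function.update V i v') = f V)
    (u : Fin 4 → Fin 3 → ℝ) (lam : Fin 4 → ℝ)
    (hdiv : ∀ k, IsDivision (u k))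
    (hclass : ∀ k, SingleMindedDiv (u k) ∨ DoubleMindedDiv (f V) (u k) ∨ u k = f V)
    (hside : ∀ k j, (f V j < V i j → f V j ≤ u k j) ∧ (V i j < f V j → u k j ≤ f V j) ∧
      (V i j = f V j → u k j = V i j))
    (hl0 : ∀ k, 0 ≤ lam k) (hl1 : ∑ k, lam k = 1)
    (hcombo : ∀ j, V i j = ∑ k, lam k * u k j) :
    ∃ v' : Fin 3 → ℝ, IsDivision v' ∧
      loss f V ≤ loss f (Function.update V i v') ∧
      (loss f (Function.update V i v') = loss f V →
        (SingleMindedDiv v' ∨ DoubleMindedDiv (f V) v' ∨ v' = f V) ∧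
        f (Function.update V i v') = f V) := by
  classical
  have hnne : (n : ℝ) ≠ 0 := Nat.cast_ne_zero.mpr (by omega)
  have hout : ∀ k, f (Function.update V i (u k)) = f V :=
    fun k => hinv (u k) (hdiv k) (hside k)
  set T : Fin 3 → ℝ := fun j => ∑ k ∈ univ.erase i, V k j with hT
  set h : (Fin 3 → ℝ) → ℝ := fun v => ∑ j, |f V j - (T j + v j) / n| with hh
  have hsum_update : ∀ (v : Fin 3 → ℝ) (j : Fin 3),
      (∑ k, Function.update V i v k j) = v j + T j := by
    intro v j
    have : ∀ k, Function.update V i v k j = if k = i then v j else V k j := by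
      intro k
      rcases eq_or_ne k i with rfl | hne
      · simp
      · simp [Function.update_of_ne hne, hne]
    rw [Finset.sum_congr rfl (fun k _ => this k)]
    rw [← Finset.add_sum_erase _ _ (Finset.mem_univ i), if_pos rfl]
    congr 1
    apply Finset.sum_congr rfl
    intro k hk
    rw [if_neg (Finset.mem_erase.mp hk).1]
  have hlossU : ∀ k, loss f (Function.update V i (u k)) = h (u k) := by
    intro k
    rw [loss, l1, hh]
    apply Finset.sum_congr rfl
    intro j _
    rw [hout k, propDiv, hsum_update, add_comm (u k j) (T j)]
  have hlossV : loss f V = h (V i) := by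
    rw [loss, l1, hh]
    apply Finset.sum_congr rfl
    intro j _
    rw [propDiv]
    congr 2
    rw [← Finset.add_sum_erase _ _ (Finset.mem_univ i), add_comm]
  have hkey : ∀ j, f V j - (T j + ∑ k, lam k * u k j) / n
      = ∑ k, lam k * (f V j - (T j + u k j) / n) := by
    intro j
    have e1 : ∀ A B : ℝ, ∑ k, lam k * (A - (B + u k j) / n)
        = (∑ k, lam k) * (A - B / n) - (∑ k, lam k * u k j) / n := by
      intro A B
      rw [Finset.sum_mul, Finset.sum_div, ← Finset.sum_sub_distrib]
      apply Finset.sum_congr rfl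
      intro k _
      ring
    rw [e1 (f V j) (T j), hl1, one_mul]
    ring
  have hconv : h (V i) ≤ ∑ k, lam k * h (u k) := by
    rw [hh]
    simp only
    calc ∑ j, |f V j - (T j + V i j) / n|
        = ∑ j, |∑ k, lam k * (f V j - (T j + u k j) / n)| := by
          apply Finset.sum_congr rfl
          intro j _
          rw [hcombo j, hkey j]
      _ ≤ ∑ j, ∑ k, |lam k * (f V j - (T j + u k j) / n)| := by
          apply Finset.sum_le_sum
          intro j _
          exact Finset.abs_sum_le_sum_abs _ _
      _ = ∑ k, lam k * ∑ j, |f V j - (T j + u k j) / n| := by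
          rw [Finset.sum_comm]
          apply Finset.sum_congr rfl
          intro k _
          rw [Finset.mul_sum]
          apply Finset.sum_congr rfl
          intro j _
          rw [abs_mul, abs_of_nonneg (hl0 k)]
      _ = ∑ k, lam k * h (u k) := rfl
  obtain ⟨kmax, -, hkmax⟩ := Finset.exists_max_image univ (fun k => h (u k)) ⟨0, mem_univ 0⟩
  have hmax : ∑ k, lam k * h (u k) ≤ h (u kmax) := by
    calc ∑ k, lam k * h (u k) ≤ ∑ k, lam k * h (u kmax) := by
          apply Finset.sum_le_sum
          intro k _
          exact mul_le_mul_of_nonneg_left (hkmax k (mem_univ k)) (hl0 k)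
      _ = h (u kmax) := by rw [← Finset.sum_mul, hl1, one_mul]
  refine ⟨u kmax, hdiv kmax, ?_, fun _ => ⟨hclass kmax, hout kmax⟩⟩
  rw [hlossV, hlossU kmax]
  exact le_trans hconv hmax

set_option maxHeartbeats 1000000 in
/-- Let `f` be a moving phantom mechanism for `m = 3`, `V` a profile, and
`i` a voter that is neither single-minded, double-minded nor fully-satisfied. Then
there is a division `v'` with `ℓ(V₋ᵢ, v') ≥ ℓ(V)`; moreover whenever equality holds,
`v'` is single-minded, double-minded or fully-satisfied and the outcome is unchanged. -/
theorem worst_case_helper {n : ℕ} (hn : 1 ≤ n)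
    (f : (Fin n → Fin 3 → ℝ) → (Fin 3 → ℝ)) (Y : PhantomSystem n)
    (hf : IsMovingPhantom f Y)
    (V : Fin n → Fin 3 → ℝ) (hV : ∀ i, IsDivision (V i))
    (i : Fin n)
    (hns : ¬ SingleMindedDiv (V i))
    (hnd : ¬ DoubleMindedDiv (f V) (V i))
    (hnf : V i ≠ f V) :
    ∃ v' : Fin 3 → ℝ, IsDivision v' ∧
      loss f V ≤ loss f (Function.update V i v') ∧
      (loss f (Function.update V i v') = loss f V →
        (SingleMindedDiv v' ∨ DoubleMindedDiv (f V) v' ∨ v' = f V) ∧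
        f (Function.update V i v') = f V) := by
  classical
  obtain ⟨t, ht, hsum, hmed⟩ := hf V hV
  have hwI : ∀ j, 0 ≤ f V j ∧ f V j ≤ 1 := by
    intro j
    have := phantomMedian_mem_Icc Y V hV t ht j
    rw [hmed j]
    exact this
  have hwsum : (∑ j, f V j) = 1 := by
    rw [Finset.sum_congr rfl fun j _ => hmed j]; exact hsum
  have hinv : ∀ v' : Fin 3 → ℝ, IsDivision v' →
      (∀ j, (f V j < V i j → f V j ≤ v' j) ∧ (V i j < f V j → v' j ≤ f V j) ∧
        (V i j = f V j → v' j = V i j)) →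
      f (Function.update V i v') = f V :=
    fun v' h1 h2 => outcome_invariant hn f Y hf V hV i v' h1 h2
  have hVi := hV i
  obtain ⟨jp, hjp⟩ : ∃ jp, f V jp < V i jp := by
    by_contra hc
    push_neg at hc
    have heq := (Finset.sum_eq_sum_iff_of_le (fun j _ => hc j)).mp (by rw [hVi.2, hwsum])
    exact hnf (funext fun j => heq j (mem_univ j))
  obtain ⟨jn, hjn⟩ : ∃ jn, V i jn < f V jn := by
    by_contra hc
    push_neg at hc
    have heq := (Finset.sum_eq_sum_iff_of_le (fun j _ => hc j)).mp (by rw [hVi.2, hwsum])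
    exact hnf (funext fun j => (heq j (mem_univ j)).symm)
  have hpn : jp ≠ jn := fun hq => by rw [hq] at hjp; linarith
  obtain ⟨j0, hpj0, hnj0, hcov⟩ : ∃ j0, jp ≠ j0 ∧ jn ≠ j0 ∧ ∀ j : Fin 3,
      j = jp ∨ j = jn ∨ j = j0 := by
    have : ∀ a b : Fin 3, a ≠ b → ∃ c, a ≠ c ∧ b ≠ c ∧ ∀ j : Fin 3,
        j = a ∨ j = b ∨ j = c := by decide
    exact this jp jn hpn
  have hws3 : f V jp + f V jn + f V j0 = 1 := by
    rw [← sum_three hpn hpj0 hnj0 (f V)]; exact hwsum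
  have hvs3 : V i jp + V i jn + V i j0 = 1 := by
    rw [← sum_three hpn hpj0 hnj0 (V i)]; exact hVi.2
  have hbp := hwI jp
  have hbn := hwI jn
  have hb0 := hwI j0
  have hvbp := hVi.1 jp
  have hvbn := hVi.1 jn
  have hvb0 := hVi.1 j0
  have hwn0 : (0:ℝ) < f V jn := lt_of_le_of_lt hvbn.1 hjn
  have hwnne : f V jn ≠ 0 := ne_of_gt hwn0
  have hwdiv : IsDivision (f V) := ⟨hwI, hwsum⟩
  have hwpe : f V jp = 1 - f V jn - f V j0 := by linarith
  have hvpe : V i jp = 1 - V i jn - V i j0 := by linarith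
  have hvne : V i jn = 1 - V i jp - V i j0 := by linarith
  have side_w : ∀ j : Fin 3, (f V j < V i j → f V j ≤ f V j) ∧
      (V i j < f V j → f V j ≤ f V j) ∧ (V i j = f V j → f V j = V i j) :=
    fun j => ⟨fun _ => le_rfl, fun _ => le_rfl, fun h => h.symm⟩
  have simpNe := hpn
  rcases lt_trichotomy (V i j0) (f V j0) with hc0 | hc0 | hc0
  · -- V i j0 < f V j0 : two minus coordinates
    have hw00 : (0:ℝ) < f V j0 := lt_of_le_of_lt hvb0.1 hc0
    have hw0ne : f V j0 ≠ 0 := ne_of_gt hw00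
    have hA0 : 0 ≤ V i jn / f V jn := div_nonneg hvbn.1 hwn0.le
    have hA1 : V i jn / f V jn ≤ 1 := by rw [div_le_one hwn0]; linarith
    have hB0 : 0 ≤ V i j0 / f V j0 := div_nonneg hvb0.1 hw00.le
    have hB1 : V i j0 / f V j0 ≤ 1 := by rw [div_le_one hw00]; linarith
    have side_D1 : ∀ j : Fin 3, (f V j < V i j → f V j ≤ doubleDiv (f V) jn jp j) ∧
        (V i j < f V j → doubleDiv (f V) jn jp j ≤ f V j) ∧
        (V i j = f V j → doubleDiv (f V) jn jp j = V i j) := by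
      intro j
      rcases hcov j with rfl | rfl | rfl <;>
        refine ⟨fun hh => ?_, fun hh => ?_, fun hh => ?_⟩ <;>
        simp only [doubleDiv, hpn, hpj0, hnj0, Ne.symm hpn, Ne.symm hpj0, Ne.symm hnj0,
          eq_self_iff_true, if_true, if_false, ite_true, ite_false] <;>
        linarith
    have side_D2 : ∀ j : Fin 3, (f V j < V i j → f V j ≤ doubleDiv (f V) j0 jp j) ∧
        (V i j < f V j → doubleDiv (f V) j0 jp j ≤ f V j) ∧
        (V i j = f V j → doubleDiv (f V) j0 jp j = V i j) := by
      intro j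
      rcases hcov j with rfl | rfl | rfl <;>
        refine ⟨fun hh => ?_, fun hh => ?_, fun hh => ?_⟩ <;>
        simp only [doubleDiv, hpn, hpj0, hnj0, Ne.symm hpn, Ne.symm hpj0, Ne.symm hnj0,
          eq_self_iff_true, if_true, if_false, ite_true, ite_false] <;>
        linarith
    have side_S : ∀ j : Fin 3, (f V j < V i j → f V j ≤ singleDiv jp j) ∧
        (V i j < f V j → singleDiv jp j ≤ f V j) ∧
        (V i j = f V j → singleDiv jp j = V i j) := by
      intro j
      rcases hcov j with rfl | rfl | rfl <;>
        refine ⟨fun hh => ?_, fun hh => ?_, fun hh => ?_⟩ <;>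
        simp only [singleDiv, hpn, hpj0, hnj0, Ne.symm hpn, Ne.symm hpj0, Ne.symm hnj0,
          eq_self_iff_true, if_true, if_false, ite_true, ite_false] <;>
        linarith
    have combo : ∀ j : Fin 3, V i j =
        ((V i jn / f V jn) * (V i j0 / f V j0)) * f V j +
        ((V i jn / f V jn) * (1 - V i j0 / f V j0)) * doubleDiv (f V) jn jp j +
        ((1 - V i jn / f V jn) * (V i j0 / f V j0)) * doubleDiv (f V) j0 jp j +
        ((1 - V i jn / f V jn) * (1 - V i j0 / f V j0)) * singleDiv jp j := by
      intro j
      rcases hcov j with rfl | rfl | rfl <;>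
        simp only [doubleDiv, singleDiv, hpn, hpj0, hnj0, Ne.symm hpn, Ne.symm hpj0,
          Ne.symm hnj0, eq_self_iff_true, if_true, if_false, ite_true, ite_false] <;>
        (try simp only [hvpe, hwpe]) <;> field_simp <;> ring
    refine assemble hn f V i hinv
      ![f V, doubleDiv (f V) jn jp, doubleDiv (f V) j0 jp, singleDiv jp]
      ![(V i jn / f V jn) * (V i j0 / f V j0),
        (V i jn / f V jn) * (1 - V i j0 / f V j0),
        (1 - V i jn / f V jn) * (V i j0 / f V j0),
        (1 - V i jn / f V jn) * (1 - V i j0 / f V j0)]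
      ?_ ?_ ?_ ?_ ?_ ?_
    · intro k
      fin_cases k
      exacts [hwdiv, doubleDiv_isDivision hwI (Ne.symm hpn),
        doubleDiv_isDivision hwI (Ne.symm hpj0), singleDiv_isDivision jp]
    · intro k
      fin_cases k
      exacts [Or.inr (Or.inr rfl), Or.inr (Or.inl (doubleDiv_isDouble (f V) (Ne.symm hpn))),
        Or.inr (Or.inl (doubleDiv_isDouble (f V) (Ne.symm hpj0))),
        Or.inl (singleDiv_isSingle jp)]
    · intro k
      fin_cases k
      exacts [side_w, side_D1, side_D2, side_S]
    · intro k
      fin_cases k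
      exacts [mul_nonneg hA0 hB0,
        mul_nonneg hA0 (show (0:ℝ) ≤ 1 - V i j0 / f V j0 by linarith),
        mul_nonneg (show (0:ℝ) ≤ 1 - V i jn / f V jn by linarith) hB0,
        mul_nonneg (show (0:ℝ) ≤ 1 - V i jn / f V jn by linarith)
          (show (0:ℝ) ≤ 1 - V i j0 / f V j0 by linarith)]
    · rw [Fin.sum_univ_four]
      show (V i jn / f V jn) * (V i j0 / f V j0) +
        (V i jn / f V jn) * (1 - V i j0 / f V j0) +
        (1 - V i jn / f V jn) * (V i j0 / f V j0) +
        (1 - V i jn / f V jn) * (1 - V i j0 / f V j0) = 1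
      ring
    · intro j
      rw [Fin.sum_univ_four]
      exact combo j
  · -- V i j0 = f V j0
    have hA0 : 0 ≤ V i jn / f V jn := div_nonneg hvbn.1 hwn0.le
    have hA1 : V i jn / f V jn ≤ 1 := by rw [div_le_one hwn0]; linarith
    have side_D1 : ∀ j : Fin 3, (f V j < V i j → f V j ≤ doubleDiv (f V) j0 jp j) ∧
        (V i j < f V j → doubleDiv (f V) j0 jp j ≤ f V j) ∧
        (V i j = f V j → doubleDiv (f V) j0 jp j = V i j) := by
      intro j
      rcases hcov j with rfl | rfl | rfl <;>
        refine ⟨fun hh => ?_, fun hh => ?_, fun hh => ?_⟩ <;>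
        simp only [doubleDiv, hpn, hpj0, hnj0, Ne.symm hpn, Ne.symm hpj0, Ne.symm hnj0,
          eq_self_iff_true, if_true, if_false, ite_true, ite_false] <;>
        linarith
    have combo : ∀ j : Fin 3, V i j =
        (V i jn / f V jn) * f V j +
        (1 - V i jn / f V jn) * doubleDiv (f V) j0 jp j +
        0 * f V j + 0 * f V j := by
      intro j
      rcases hcov j with rfl | rfl | rfl <;>
        simp only [doubleDiv, hpn, hpj0, hnj0, Ne.symm hpn, Ne.symm hpj0,
          Ne.symm hnj0, eq_self_iff_true, if_true, if_false, ite_true, ite_false] <;>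
        (try simp only [hvpe, hwpe, hc0]) <;> field_simp <;> ring
    refine assemble hn f V i hinv
      ![f V, doubleDiv (f V) j0 jp, f V, f V]
      ![V i jn / f V jn, 1 - V i jn / f V jn, 0, 0]
      ?_ ?_ ?_ ?_ ?_ ?_
    · intro k
      fin_cases k
      exacts [hwdiv, doubleDiv_isDivision hwI (Ne.symm hpj0), hwdiv, hwdiv]
    · intro k
      fin_cases k
      exacts [Or.inr (Or.inr rfl), Or.inr (Or.inl (doubleDiv_isDouble (f V) (Ne.symm hpj0))),
        Or.inr (Or.inr rfl), Or.inr (Or.inr rfl)]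
    · intro k
      fin_cases k
      exacts [side_w, side_D1, side_w, side_w]
    · intro k
      fin_cases k
      exacts [hA0, show (0:ℝ) ≤ 1 - V i jn / f V jn by linarith, le_rfl, le_rfl]
    · rw [Fin.sum_univ_four]
      show V i jn / f V jn + (1 - V i jn / f V jn) + 0 + 0 = 1
      ring
    · intro j
      rw [Fin.sum_univ_four]
      exact combo j
  · -- f V j0 < V i j0 : two plus coordinates
    have side_D1 : ∀ j : Fin 3, (f V j < V i j → f V j ≤ doubleDiv (f V) jp j0 j) ∧
        (V i j < f V j → doubleDiv (f V) jp j0 j ≤ f V j) ∧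
        (V i j = f V j → doubleDiv (f V) jp j0 j = V i j) := by
      intro j
      rcases hcov j with rfl | rfl | rfl <;>
        refine ⟨fun hh => ?_, fun hh => ?_, fun hh => ?_⟩ <;>
        simp only [doubleDiv, hpn, hpj0, hnj0, Ne.symm hpn, Ne.symm hpj0, Ne.symm hnj0,
          eq_self_iff_true, if_true, if_false, ite_true, ite_false] <;>
        linarith
    have side_D2 : ∀ j : Fin 3, (f V j < V i j → f V j ≤ doubleDiv (f V) j0 jp j) ∧
        (V i j < f V j → doubleDiv (f V) j0 jp j ≤ f V j) ∧
        (V i j = f V j → doubleDiv (f V) j0 jp j = V i j) := by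
      intro j
      rcases hcov j with rfl | rfl | rfl <;>
        refine ⟨fun hh => ?_, fun hh => ?_, fun hh => ?_⟩ <;>
        simp only [doubleDiv, hpn, hpj0, hnj0, Ne.symm hpn, Ne.symm hpj0, Ne.symm hnj0,
          eq_self_iff_true, if_true, if_false, ite_true, ite_false] <;>
        linarith
    have combo : ∀ j : Fin 3, V i j =
        (V i jn / f V jn) * f V j +
        ((V i j0 - f V j0) / f V jn) * doubleDiv (f V) jp j0 j +
        ((V i jp - f V jp) / f V jn) * doubleDiv (f V) j0 jp j +
        0 * f V j := by
      intro j
      rcases hcov j with rfl | rfl | rfl <;>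
        simp only [doubleDiv, hpn, hpj0, hnj0, Ne.symm hpn, Ne.symm hpj0,
          Ne.symm hnj0, eq_self_iff_true, if_true, if_false, ite_true, ite_false] <;>
        (try simp only [hvne, hwpe]) <;> field_simp <;> ring
    refine assemble hn f V i hinv
      ![f V, doubleDiv (f V) jp j0, doubleDiv (f V) j0 jp, f V]
      ![V i jn / f V jn, (V i j0 - f V j0) / f V jn, (V i jp - f V jp) / f V jn, 0]
      ?_ ?_ ?_ ?_ ?_ ?_
    · intro k
      fin_cases k
      exacts [hwdiv, doubleDiv_isDivision hwI hpj0,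
        doubleDiv_isDivision hwI (Ne.symm hpj0), hwdiv]
    · intro k
      fin_cases k
      exacts [Or.inr (Or.inr rfl), Or.inr (Or.inl (doubleDiv_isDouble (f V) hpj0)),
        Or.inr (Or.inl (doubleDiv_isDouble (f V) (Ne.symm hpj0))), Or.inr (Or.inr rfl)]
    · intro k
      fin_cases k
      exacts [side_w, side_D1, side_D2, side_w]
    · intro k
      fin_cases k
      exacts [div_nonneg hvbn.1 hwn0.le,
        div_nonneg (show (0:ℝ) ≤ V i j0 - f V j0 by linarith) hwn0.le,
        div_nonneg (show (0:ℝ) ≤ V i jp - f V jp by linarith) hwn0.le, le_rfl]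
    · rw [Fin.sum_univ_four]
      show V i jn / f V jn + (V i j0 - f V j0) / f V jn +
        (V i jp - f V jp) / f V jn + 0 = 1
      field_simp
      linarith
    · intro j
      rw [Fin.sum_univ_four]
      exact combo j
end

section
/- Let f be a moving phantom mechanism for m = 3 projects with phantom system Y = {y_k(t) : k = 0,…,n}, and let V be a three-type profile described by the division x = (x_1,x_2,x_3) with x_j > 0 for all j ∈ [3], counts a_j of single-minded voters toward project j, counts b_{k,j} of double-minded voters proposing value 1 − x_k on project j and x_k on project k, and C fully-satisfied voters proposing x. Let z_j = a_j + Σ_{k ≠ j} b_{k,j} and q_j = Σ_{k ≠ j} b_{j,k}. Then f(V) = x if and only if y_{z_j}(t*) ≤ x_j ≤ y_{z_j + q_j + C}(t*) for every j ∈ [3], for any t* ∈ [0,1] at which the sum over the three projects of the medians of the voter reports together with the phantom values y_k(t*) equals 1. -/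
open Finset

section auxMedian


lemma list_le_count {l : List ℝ} (hs : l.Pairwise (· ≤ ·)) {n : ℕ} (hn : n < l.length)
    {v : ℝ} (h : l[n] ≤ v) : n + 1 ≤ (l.filter (fun a => decide (a ≤ v))).length := by
  have key : (l.filter (fun a => decide (a ≤ v))).length
      = ((l.take (n+1)).filter (fun a => decide (a ≤ v))).length
        + ((l.drop (n+1)).filter (fun a => decide (a ≤ v))).length := by
    rw [← List.length_append, ← List.filter_append, List.take_append_drop]
  have h2 : (l.take (n+1)).filter (fun a => decide (a ≤ v)) = l.take (n+1) := by
    rw [List.filter_eq_self]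
    intro a ha
    rw [List.mem_take_iff_getElem] at ha
    obtain ⟨i, hi, rfl⟩ := ha
    simp only [decide_eq_true_eq]
    have hle : l.get ⟨i, by omega⟩ ≤ l.get ⟨n, hn⟩ :=
      hs.rel_get_of_le (by simp [Fin.mk_le_mk]; omega)
    simp only [List.get_eq_getElem] at hle
    linarith
  rw [h2] at key
  have h3 : (l.take (n+1)).length = n+1 := by
    rw [List.length_take]; omega
  omega

lemma list_lt_count {l : List ℝ} (hs : l.Pairwise (· ≤ ·)) {n : ℕ} (hn : n < l.length)
    {v : ℝ} (h : v < l[n]) : (l.filter (fun a => decide (a ≤ v))).length ≤ n := by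
  have key : (l.filter (fun a => decide (a ≤ v))).length
      = ((l.take n).filter (fun a => decide (a ≤ v))).length
        + ((l.drop n).filter (fun a => decide (a ≤ v))).length := by
    rw [← List.length_append, ← List.filter_append, List.take_append_drop]
  have h2 : (l.drop n).filter (fun a => decide (a ≤ v)) = [] := by
    rw [List.filter_eq_nil_iff]
    intro a ha
    rw [List.mem_drop_iff_getElem] at ha
    obtain ⟨i, hi, rfl⟩ := ha
    simp only [decide_eq_true_eq, not_le]
    have hle : l.get ⟨n, hn⟩ ≤ l.get ⟨n + i, by omega⟩ :=
      hs.rel_get_of_le (by simp [Fin.mk_le_mk])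
    simp only [List.get_eq_getElem] at hle
    linarith
  rw [h2, List.length_nil] at key
  have h3 := List.length_filter_le (fun a => decide (a ≤ v)) (l.take n)
  have h4 : (l.take n).length = n := by rw [List.length_take]; omega
  omega

lemma list_ge_count {l : List ℝ} (hs : l.Pairwise (· ≤ ·)) {n : ℕ} (hn : n < l.length)
    {v : ℝ} (h : v ≤ l[n]) : l.length - n ≤ (l.filter (fun a => decide (v ≤ a))).length := by
  have key : (l.filter (fun a => decide (v ≤ a))).length
      = ((l.take n).filter (fun a => decide (v ≤ a))).length
        + ((l.drop n).filter (fun a => decide (v ≤ a))).length := by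
    rw [← List.length_append, ← List.filter_append, List.take_append_drop]
  have h2 : (l.drop n).filter (fun a => decide (v ≤ a)) = l.drop n := by
    rw [List.filter_eq_self]
    intro a ha
    rw [List.mem_drop_iff_getElem] at ha
    obtain ⟨i, hi, rfl⟩ := ha
    simp only [decide_eq_true_eq]
    have hle : l.get ⟨n, hn⟩ ≤ l.get ⟨n + i, by omega⟩ :=
      hs.rel_get_of_le (by simp [Fin.mk_le_mk])
    simp only [List.get_eq_getElem] at hle
    linarith
  rw [h2] at key
  have h3 : (l.drop n).length = l.length - n := by rw [List.length_drop]
  omega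

lemma list_gt_count {l : List ℝ} (hs : l.Pairwise (· ≤ ·)) {n : ℕ} (hn : n < l.length)
    {v : ℝ} (h : l[n] < v) : (l.filter (fun a => decide (v ≤ a))).length ≤ l.length - (n+1) := by
  have key : (l.filter (fun a => decide (v ≤ a))).length
      = ((l.take (n+1)).filter (fun a => decide (v ≤ a))).length
        + ((l.drop (n+1)).filter (fun a => decide (v ≤ a))).length := by
    rw [← List.length_append, ← List.filter_append, List.take_append_drop]
  have h2 : (l.take (n+1)).filter (fun a => decide (v ≤ a)) = [] := by
    rw [List.filter_eq_nil_iff]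
    intro a ha
    rw [List.mem_take_iff_getElem] at ha
    obtain ⟨i, hi, rfl⟩ := ha
    simp only [decide_eq_true_eq, not_le]
    have hle : l.get ⟨i, by omega⟩ ≤ l.get ⟨n, hn⟩ :=
      hs.rel_get_of_le (by simp [Fin.mk_le_mk]; omega)
    simp only [List.get_eq_getElem] at hle
    linarith
  rw [h2, List.length_nil] at key
  have h3 := List.length_filter_le (fun a => decide (v ≤ a)) (l.drop (n+1))
  have h4 : (l.drop (n+1)).length = l.length - (n+1) := by rw [List.length_drop]
  omega

lemma medianAt_le_iff_s7 {s : Multiset ℝ} {n : ℕ} (hcard : Multiset.card s = 2*n+1) (v : ℝ) :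
    medianAt s n ≤ v ↔ n+1 ≤ Multiset.card (s.filter (fun a => a ≤ v)) := by
  have hsort : (s.sort (· ≤ ·)).Pairwise (· ≤ ·) := Multiset.pairwise_sort s _
  have hlen : (s.sort (· ≤ ·)).length = 2*n+1 := by rw [Multiset.length_sort, hcard]
  have hn : n < (s.sort (· ≤ ·)).length := by omega
  have hfc : Multiset.card (s.filter (fun a => a ≤ v))
      = ((s.sort (· ≤ ·)).filter (fun a => decide (a ≤ v))).length := by
    conv_lhs => rw [← Multiset.sort_eq s (· ≤ ·)]
    rw [Multiset.filter_coe, Multiset.coe_card]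
  have hmed : medianAt s n = (s.sort (· ≤ ·))[n] := List.getD_eq_getElem _ _ hn
  rw [hmed, hfc]
  constructor
  · exact fun h => list_le_count hsort hn h
  · intro h
    by_contra hlt
    push_neg at hlt
    have := list_lt_count hsort hn hlt
    omega

lemma le_medianAt_iff {s : Multiset ℝ} {n : ℕ} (hcard : Multiset.card s = 2*n+1) (v : ℝ) :
    v ≤ medianAt s n ↔ n+1 ≤ Multiset.card (s.filter (fun a => v ≤ a)) := by
  have hsort : (s.sort (· ≤ ·)).Pairwise (· ≤ ·) := Multiset.pairwise_sort s _
  have hlen : (s.sort (· ≤ ·)).length = 2*n+1 := by rw [Multiset.length_sort, hcard]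
  have hn : n < (s.sort (· ≤ ·)).length := by omega
  have hfc : Multiset.card (s.filter (fun a => v ≤ a))
      = ((s.sort (· ≤ ·)).filter (fun a => decide (v ≤ a))).length := by
    conv_lhs => rw [← Multiset.sort_eq s (· ≤ ·)]
    rw [Multiset.filter_coe, Multiset.coe_card]
  have hmed : medianAt s n = (s.sort (· ≤ ·))[n] := List.getD_eq_getElem _ _ hn
  rw [hmed, hfc]
  constructor
  · intro h
    have := list_ge_count hsort hn h
    omega
  · intro h
    by_contra hlt
    push_neg at hlt
    have := list_gt_count hsort hn hlt
    omega


section auxDist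
set_option linter.unusedSectionVars false
lemma sd_at_self (j : Fin 3) : singleDiv j j = 1 := by simp [singleDiv]
lemma sd_at_ne {m j : Fin 3} (h : m ≠ j) : singleDiv j m = 0 := by simp [singleDiv, h]
lemma dd_at_k (x : Fin 3 → ℝ) (k j : Fin 3) : doubleDiv x k j k = x k := by simp [doubleDiv]
lemma dd_at_j (x : Fin 3 → ℝ) {k j : Fin 3} (hkj : k ≠ j) : doubleDiv x k j j = 1 - x k := by
  simp [doubleDiv, Ne.symm hkj]
lemma dd_at_other (x : Fin 3 → ℝ) {k j m : Fin 3} (hmk : m ≠ k) (hmj : m ≠ j) :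
    doubleDiv x k j m = 0 := by simp [doubleDiv, hmk, hmj]

lemma fin3_third : ∀ k j : Fin 3, ∃ m, m ≠ k ∧ m ≠ j := by decide
lemma fin3_univ : ∀ j k m : Fin 3, j ≠ k → j ≠ m → k ≠ m →
    ({j, k, m} : Finset (Fin 3)) = Finset.univ := by decide
lemma fin3_pairs : ∀ k j k' j' m' : Fin 3, k ≠ j → k' ≠ j' → m' ≠ k' → m' ≠ j' →
    m' ≠ k → m' ≠ j → ¬(k = k' ∧ j = j') → (k = j' ∧ j = k') := by decide

section distinct
variable {x : Fin 3 → ℝ} (hxp : ∀ j, 0 < x j) (hs : ∑ j, x j = 1)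
include hxp hs

lemma sum3 (j k m : Fin 3) (hjk : j ≠ k) (hjm : j ≠ m) (hkm : k ≠ m) :
    x j + x k + x m = 1 := by
  rw [← hs, ← fin3_univ j k m hjk hjm hkm]
  rw [Finset.sum_insert (by simp [hjk, hjm]), Finset.sum_insert (by simp [hkm]),
    Finset.sum_singleton]
  ring

lemma x_lt_one (j : Fin 3) : x j < 1 := by
  obtain ⟨k, m, hkm, hkj, hmj⟩ : ∃ k m : Fin 3, k ≠ m ∧ k ≠ j ∧ m ≠ j := by
    obtain ⟨k, hk, _⟩ := fin3_third j j
    obtain ⟨m, hm1, hm2⟩ := fin3_third j k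
    exact ⟨k, m, fun h => hm2 h.symm, hk, hm1⟩
  have := sum3 hxp hs j k m (Ne.symm hkj) (Ne.symm hmj) hkm
  have := hxp k; have := hxp m
  linarith

lemma sum_two_lt (j k : Fin 3) (hjk : j ≠ k) : x j + x k < 1 := by
  obtain ⟨m, hm1, hm2⟩ := fin3_third j k
  have := sum3 hxp hs j k m hjk (Ne.symm hm1) (Ne.symm hm2)
  have := hxp m
  linarith

lemma x_ne_sd (j : Fin 3) : x ≠ singleDiv j := by
  intro he
  obtain ⟨m, hm, -⟩ := fin3_third j j
  have := congrFun he m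
  rw [sd_at_ne hm] at this
  exact absurd this (ne_of_gt (hxp m))

lemma x_ne_dd (k j : Fin 3) (hkj : k ≠ j) : x ≠ doubleDiv x k j := by
  intro he
  obtain ⟨m, hm1, hm2⟩ := fin3_third k j
  have := congrFun he m
  rw [dd_at_other x hm1 hm2] at this
  exact absurd this (ne_of_gt (hxp m))

lemma sd_ne_dd (j' k j : Fin 3) (hkj : k ≠ j) : singleDiv j' ≠ doubleDiv x k j := by
  intro he
  have e := congrFun he k
  rw [dd_at_k] at e
  by_cases h : k = j'
  · rw [h, sd_at_self] at e
    have := x_lt_one hxp hs j'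
    linarith
  · rw [sd_at_ne h] at e
    exact absurd e.symm (ne_of_gt (hxp k))

lemma dd_ne_dd (k j k' j' : Fin 3) (hkj : k ≠ j) (hk'j' : k' ≠ j')
    (hne : ¬(k = k' ∧ j = j')) : doubleDiv x k j ≠ doubleDiv x k' j' := by
  intro he
  obtain ⟨m', hm'k', hm'j'⟩ := fin3_third k' j'
  have e := congrFun he m'
  rw [dd_at_other x hm'k' hm'j'] at e
  have hm'k : m' ≠ k := by
    intro h; subst h
    rw [dd_at_k] at e
    exact absurd e (ne_of_gt (hxp m'))
  have hm'j : m' ≠ j := by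
    intro h; subst h
    rw [dd_at_j x hkj] at e
    have := x_lt_one hxp hs k
    linarith
  obtain ⟨hkj', hjk'⟩ := fin3_pairs k j k' j' m' hkj hk'j' hm'k' hm'j' hm'k hm'j hne
  have e2 := congrFun he k
  rw [dd_at_k] at e2
  have : doubleDiv x k' j' k = 1 - x k' := by rw [hkj']; exact dd_at_j x hk'j'
  rw [this, ← hjk'] at e2
  have := sum_two_lt hxp hs k j hkj
  linarith

end distinct


/-- Characterization of three-type profiles: for a moving phantom system
`Y`, a target division `x` with all coordinates positive, and a three-type profile with
`C` fully-satisfied voters, `a j` single-minded voters for project `j` and `b k j`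
double-minded voters proposing `x k` on project `k` and `1 - x k` on project `j`,
the medians at a feasible `t*` equal `x` iff
`y (z j) t* ≤ x j ≤ y (z j + q j + C) t*` for every project `j`. -/
theorem three_type_characterization {n : ℕ} (hn : 1 ≤ n)
    (Y : PhantomSystem n)
    (x : Fin 3 → ℝ) (hx : IsDivision x) (hxpos : ∀ j, 0 < x j)
    (V : Fin n → Fin 3 → ℝ)
    (a : Fin 3 → ℕ) (b : Fin 3 → Fin 3 → ℕ) (C : ℕ)
    (hall : ∀ i, V i = x ∨ (∃ j, V i = singleDiv j) ∨
        ∃ k j : Fin 3, k ≠ j ∧ V i = doubleDiv x k j)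
    (hC : C = Nat.card {i : Fin n // V i = x})
    (ha : ∀ j, a j = Nat.card {i : Fin n // V i = singleDiv j})
    (hb : ∀ k j : Fin 3, k ≠ j → b k j = Nat.card {i : Fin n // V i = doubleDiv x k j})
    (t : ℝ) (ht : t ∈ Set.Icc (0:ℝ) 1)
    (hfeas : ∑ j, phantomMedian V (fun k => Y.y k t) j = 1) :
    ((∀ j, phantomMedian V (fun k => Y.y k t) j = x j) ↔
      ∀ j : Fin 3,
        Y.y (a j + ∑ k ∈ Finset.univ.erase j, b k j) t ≤ x j ∧
        x j ≤ Y.y ((a j + ∑ k ∈ Finset.univ.erase j, b k j) +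
                   (∑ k ∈ Finset.univ.erase j, b j k) + C) t) := by
    classical
  have hxs : ∑ j, x j = 1 := hx.2
  have hcount : ∀ u : Fin 3 → ℝ,
      (univ.filter (fun i => V i = u)).card = Nat.card {i : Fin n // V i = u} := by
    intro u
    rw [Nat.card_eq_fintype_card, Fintype.card_subtype]
  refine forall_congr' ?_
  intro j
  set z := a j + ∑ k ∈ univ.erase j, b k j with hzdef
  set q := ∑ k ∈ univ.erase j, b j k with hqdef
  -- cardinality of the value multiset
  have hscard : Multiset.card (projValues V (fun k => Y.y k t) j) = 2*n+1 := by
    simp only [projValues, Multiset.card_add, Multiset.card_map, ← Finset.card_def,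
      Finset.card_univ, Fintype.card_fin, Finset.card_range]
    omega
  -- splitting filtered counts into voter part and phantom part
  have hsplitLE : Multiset.card ((projValues V (fun k => Y.y k t) j).filter
        (fun v => v ≤ x j))
      = (univ.filter (fun i => V i j ≤ x j)).card
        + ((Finset.range (n+1)).filter (fun k => Y.y k t ≤ x j)).card := by
    rw [projValues, Multiset.filter_add, Multiset.card_add]
    congr 1
    · rw [Multiset.filter_map, Multiset.card_map, Finset.card_def, Finset.filter_val]
      exact congrArg Multiset.card (Multiset.filter_congr (fun i _ => Iff.rfl))
    · rw [Multiset.filter_map, Multiset.card_map, Finset.card_def, Finset.filter_val]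
      exact congrArg Multiset.card (Multiset.filter_congr (fun k _ => Iff.rfl))
  have hsplitGE : Multiset.card ((projValues V (fun k => Y.y k t) j).filter
        (fun v => x j ≤ v))
      = (univ.filter (fun i => x j ≤ V i j)).card
        + ((Finset.range (n+1)).filter (fun k => x j ≤ Y.y k t)).card := by
    rw [projValues, Multiset.filter_add, Multiset.card_add]
    congr 1
    · rw [Multiset.filter_map, Multiset.card_map, Finset.card_def, Finset.filter_val]
      exact congrArg Multiset.card (Multiset.filter_congr (fun i _ => Iff.rfl))
    · rw [Multiset.filter_map, Multiset.card_map, Finset.card_def, Finset.filter_val]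
      exact congrArg Multiset.card (Multiset.filter_congr (fun k _ => Iff.rfl))
  -- counting voters
  have hDin_disj : ∀ k ∈ univ.erase j, ∀ k' ∈ univ.erase j, k ≠ k' →
      Disjoint (univ.filter (fun i => V i = doubleDiv x k j))
               (univ.filter (fun i => V i = doubleDiv x k' j)) := by
    intro k hk k' hk' hne
    rw [Finset.disjoint_left]
    intro i hi1 hi2
    rw [Finset.mem_filter] at hi1 hi2
    exact dd_ne_dd hxpos hxs k j k' j (Finset.mem_erase.mp hk).1 (Finset.mem_erase.mp hk').1
      (fun h => hne h.1) (hi1.2.symm.trans hi2.2)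
  have hDout_disj : ∀ k ∈ univ.erase j, ∀ k' ∈ univ.erase j, k ≠ k' →
      Disjoint (univ.filter (fun i => V i = doubleDiv x j k))
               (univ.filter (fun i => V i = doubleDiv x j k')) := by
    intro k hk k' hk' hne
    rw [Finset.disjoint_left]
    intro i hi1 hi2
    rw [Finset.mem_filter] at hi1 hi2
    exact dd_ne_dd hxpos hxs j k j k' (Ne.symm (Finset.mem_erase.mp hk).1)
      (Ne.symm (Finset.mem_erase.mp hk').1)
      (fun h => hne h.2) (hi1.2.symm.trans hi2.2)
  have hDin_card :
      ((univ.erase j).biUnion (fun k => univ.filter (fun i => V i = doubleDiv x k j))).card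
      = ∑ k ∈ univ.erase j, b k j := by
    rw [Finset.card_biUnion hDin_disj]
    refine Finset.sum_congr rfl (fun k hk => ?_)
    rw [hcount]
    exact (hb k j (Finset.mem_erase.mp hk).1).symm
  have hDout_card :
      ((univ.erase j).biUnion (fun k => univ.filter (fun i => V i = doubleDiv x j k))).card
      = ∑ k ∈ univ.erase j, b j k := by
    rw [Finset.card_biUnion hDout_disj]
    refine Finset.sum_congr rfl (fun k hk => ?_)
    rw [hcount]
    exact (hb j k (Ne.symm (Finset.mem_erase.mp hk).1)).symm
  have hset_gt : univ.filter (fun i => x j < V i j)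
      = (univ.filter (fun i => V i = singleDiv j)) ∪
        (univ.erase j).biUnion (fun k => univ.filter (fun i => V i = doubleDiv x k j)) := by
    ext i
    simp only [Finset.mem_filter, Finset.mem_union, Finset.mem_biUnion, Finset.mem_erase,
      Finset.mem_univ, true_and, and_true]
    constructor
    · intro hlt
      rcases hall i with h | ⟨j', h⟩ | ⟨k, j', hkj', h⟩
      · rw [h] at hlt; exact absurd hlt (lt_irrefl _)
      · by_cases hjj : j = j'
        · subst hjj; left; exact h
        · rw [h, sd_at_ne hjj] at hlt
          exact absurd hlt (not_lt.mpr (hxpos j).le)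
      · by_cases hjk : j = k
        · subst hjk; rw [h, dd_at_k] at hlt; exact absurd hlt (lt_irrefl _)
        · by_cases hjj' : j = j'
          · subst hjj'; right; exact ⟨k, fun hh => hjk hh.symm, h⟩
          · rw [h, dd_at_other x hjk hjj'] at hlt
            exact absurd hlt (not_lt.mpr (hxpos j).le)
    · intro hm
      rcases hm with h | ⟨k, hkj, h⟩
      · rw [h, sd_at_self]; exact x_lt_one hxpos hxs j
      · rw [h, dd_at_j x hkj]
        have := sum_two_lt hxpos hxs j k (Ne.symm hkj)
        linarith
  have hdisj_sd_din : Disjoint (univ.filter (fun i => V i = singleDiv j))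
      ((univ.erase j).biUnion (fun k => univ.filter (fun i => V i = doubleDiv x k j))) := by
    rw [Finset.disjoint_left]
    intro i hi1 hi2
    rw [Finset.mem_filter] at hi1
    rw [Finset.mem_biUnion] at hi2
    obtain ⟨k, hk, hi2⟩ := hi2
    rw [Finset.mem_filter] at hi2
    exact sd_ne_dd hxpos hxs j k j (Finset.mem_erase.mp hk).1 (hi1.2.symm.trans hi2.2)
  have hcard_gt : (univ.filter (fun i => x j < V i j)).card = z := by
    rw [hset_gt, Finset.card_union_of_disjoint hdisj_sd_din, hDin_card, hcount, ← ha j]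
  have hzn : z ≤ n := by
    rw [← hcard_gt]
    calc (univ.filter (fun i => x j < V i j)).card
        ≤ (univ : Finset (Fin n)).card := Finset.card_filter_le _ _
      _ = n := by simp
  have hset_ge : univ.filter (fun i => x j ≤ V i j)
      = ((univ.filter (fun i => V i = x) ∪ univ.filter (fun i => V i = singleDiv j)) ∪
        (univ.erase j).biUnion (fun k => univ.filter (fun i => V i = doubleDiv x k j))) ∪
        (univ.erase j).biUnion (fun k => univ.filter (fun i => V i = doubleDiv x j k)) := by
    ext i
    simp only [Finset.mem_filter, Finset.mem_union, Finset.mem_biUnion, Finset.mem_erase,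
      Finset.mem_univ, true_and, and_true]
    constructor
    · intro hle
      rcases hall i with h | ⟨j', h⟩ | ⟨k, j', hkj', h⟩
      · left; left; left; exact h
      · by_cases hjj : j = j'
        · subst hjj; left; left; right; exact h
        · rw [h, sd_at_ne hjj] at hle
          exact absurd hle (not_le.mpr (hxpos j))
      · by_cases hjk : j = k
        · subst hjk; right; exact ⟨j', Ne.symm hkj', h⟩
        · by_cases hjj' : j = j'
          · subst hjj'; left; right; exact ⟨k, fun hh => hjk hh.symm, h⟩
          · rw [h, dd_at_other x hjk hjj'] at hle
            exact absurd hle (not_le.mpr (hxpos j))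
    · intro hm
      rcases hm with ((h | h) | ⟨k, hkj, h⟩) | ⟨k, hkj, h⟩
      · rw [h]
      · rw [h, sd_at_self]; exact (x_lt_one hxpos hxs j).le
      · rw [h, dd_at_j x hkj]
        have := sum_two_lt hxpos hxs j k (Ne.symm hkj)
        linarith
      · rw [h, dd_at_k]
  have d1 : Disjoint (univ.filter (fun i => V i = x))
      (univ.filter (fun i => V i = singleDiv j)) := by
    rw [Finset.disjoint_left]
    intro i hi1 hi2
    rw [Finset.mem_filter] at hi1 hi2
    exact x_ne_sd hxpos hxs j (hi1.2.symm.trans hi2.2)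
  have d2 : Disjoint (univ.filter (fun i => V i = x) ∪ univ.filter (fun i => V i = singleDiv j))
      ((univ.erase j).biUnion (fun k => univ.filter (fun i => V i = doubleDiv x k j))) := by
    rw [Finset.disjoint_left]
    intro i hi1 hi2
    rw [Finset.mem_biUnion] at hi2
    obtain ⟨k, hk, h2⟩ := hi2
    have hkj : k ≠ j := (Finset.mem_erase.mp hk).1
    have h2' : V i = doubleDiv x k j := (Finset.mem_filter.mp h2).2
    rcases Finset.mem_union.mp hi1 with hi1 | hi1
    · exact x_ne_dd hxpos hxs k j hkj ((Finset.mem_filter.mp hi1).2.symm.trans h2')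
    · exact sd_ne_dd hxpos hxs j k j hkj ((Finset.mem_filter.mp hi1).2.symm.trans h2')
  have d3 : Disjoint ((univ.filter (fun i => V i = x) ∪
        univ.filter (fun i => V i = singleDiv j)) ∪
        (univ.erase j).biUnion (fun k => univ.filter (fun i => V i = doubleDiv x k j)))
      ((univ.erase j).biUnion (fun k => univ.filter (fun i => V i = doubleDiv x j k))) := by
    rw [Finset.disjoint_left]
    intro i hi1 hi2
    rw [Finset.mem_biUnion] at hi2
    obtain ⟨k', hk', h2⟩ := hi2
    have hk'j : k' ≠ j := (Finset.mem_erase.mp hk').1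
    have h2' : V i = doubleDiv x j k' := (Finset.mem_filter.mp h2).2
    rcases Finset.mem_union.mp hi1 with hi1 | hi1
    · rcases Finset.mem_union.mp hi1 with hi1 | hi1
      · exact x_ne_dd hxpos hxs j k' (Ne.symm hk'j) ((Finset.mem_filter.mp hi1).2.symm.trans h2')
      · exact sd_ne_dd hxpos hxs j j k' (Ne.symm hk'j)
          ((Finset.mem_filter.mp hi1).2.symm.trans h2')
    · obtain ⟨k, hk, h1⟩ := Finset.mem_biUnion.mp hi1
      exact dd_ne_dd hxpos hxs k j j k' (Finset.mem_erase.mp hk).1 (Ne.symm hk'j)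
        (fun hh => (Finset.mem_erase.mp hk).1 hh.1)
        ((Finset.mem_filter.mp h1).2.symm.trans h2')
  have hcard_ge : (univ.filter (fun i => x j ≤ V i j)).card = z + q + C := by
    rw [hset_ge, Finset.card_union_of_disjoint d3, Finset.card_union_of_disjoint d2,
      Finset.card_union_of_disjoint d1, hDin_card, hDout_card, hcount, hcount, ← hC, ← ha j]
    omega
  have hZn : z + q + C ≤ n := by
    rw [← hcard_ge]
    calc (univ.filter (fun i => x j ≤ V i j)).card
        ≤ (univ : Finset (Fin n)).card := Finset.card_filter_le _ _
      _ = n := by simp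
  have hcard_le : (univ.filter (fun i => V i j ≤ x j)).card = n - z := by
    have h1 := Finset.card_filter_add_card_filter_not
      (s := (univ : Finset (Fin n))) (p := fun i => x j < V i j)
    have h2 : univ.filter (fun i => ¬ x j < V i j) = univ.filter (fun i => V i j ≤ x j) :=
      Finset.filter_congr (fun i _ => by simp [not_lt])
    rw [h2, hcard_gt] at h1
    have h3 : (univ : Finset (Fin n)).card = n := by simp
    omega
  -- phantom counting
  have phLE : ∀ w : ℕ, w ≤ n → (Y.y w t ≤ x j ↔
      w+1 ≤ ((Finset.range (n+1)).filter (fun k => Y.y k t ≤ x j)).card) := by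
    intro w hw
    constructor
    · intro h
      have hsub : Finset.range (w+1) ⊆
          (Finset.range (n+1)).filter (fun k => Y.y k t ≤ x j) := by
        intro k hk
        rw [Finset.mem_range] at hk
        rw [Finset.mem_filter, Finset.mem_range]
        exact ⟨by omega, le_trans (Y.mono_idx t ht k w (by omega) hw) h⟩
      have := Finset.card_le_card hsub
      simpa using this
    · intro h
      by_contra hlt
      push_neg at hlt
      have hsub : (Finset.range (n+1)).filter (fun k => Y.y k t ≤ x j) ⊆ Finset.range w := by
        intro k hk
        rw [Finset.mem_filter, Finset.mem_range] at hk
        rw [Finset.mem_range]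
        by_contra hge
        push_neg at hge
        exact absurd (le_trans (Y.mono_idx t ht w k hge (by omega)) hk.2) (not_le.mpr hlt)
      have := Finset.card_le_card hsub
      rw [Finset.card_range] at this
      omega
  have phGE : ∀ w : ℕ, w ≤ n → (x j ≤ Y.y w t ↔
      n+1-w ≤ ((Finset.range (n+1)).filter (fun k => x j ≤ Y.y k t)).card) := by
    intro w hw
    constructor
    · intro h
      have hsub : Finset.Ico w (n+1) ⊆
          (Finset.range (n+1)).filter (fun k => x j ≤ Y.y k t) := by
        intro k hk
        rw [Finset.mem_Ico] at hk
        rw [Finset.mem_filter, Finset.mem_range]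
        exact ⟨hk.2, le_trans h (Y.mono_idx t ht w k hk.1 (by omega))⟩
      have := Finset.card_le_card hsub
      rw [Nat.card_Ico] at this
      omega
    · intro h
      by_contra hlt
      push_neg at hlt
      have hsub : (Finset.range (n+1)).filter (fun k => x j ≤ Y.y k t) ⊆
          Finset.Ico (w+1) (n+1) := by
        intro k hk
        rw [Finset.mem_filter, Finset.mem_range] at hk
        rw [Finset.mem_Ico]
        refine ⟨?_, hk.1⟩
        by_contra hge
        push_neg at hge
        exact absurd (le_trans hk.2 (Y.mono_idx t ht k w (by omega) hw)) (not_le.mpr hlt)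
      have := Finset.card_le_card hsub
      rw [Nat.card_Ico] at this
      omega
  -- assembling
  simp only [phantomMedian]
  rw [le_antisymm_iff, medianAt_le_iff_s7 hscard, le_medianAt_iff hscard,
    hsplitLE, hsplitGE, hcard_le, hcard_ge]
  constructor
  · rintro ⟨h1, h2⟩
    exact ⟨(phLE z hzn).mpr (by omega), (phGE (z+q+C) hZn).mpr (by omega)⟩
  · rintro ⟨h1, h2⟩
    have g1 := (phLE z hzn).mp h1
    have g2 := (phGE (z+q+C) hZn).mp h2
    exact ⟨by omega, by omega⟩
end auxDist
end auxMedian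
end
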